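/- arXiv:math/0210219 — 3 statements merged into one kernel-verified Lean document; each statement's English description precedes it below -/
import Mathlib

section
/- Let Γ be an even lattice of signature (3, b−3) with b ≥ 4 such that Γ contains a hyperbolic-plane sublattice and every primitive isotropic element of Γ is contained in a hyperbolic-plane sublattice. Then for every m ∈ ℤ the set {[x] ∈ Q : there exists a primitive α ∈ Γ with α² = 2m and ⟨x, α⟩ = 0} is dense in the period domain Q of Γ_ℝ. -/
open Matrix
open scoped LinearAlgebra.Projectivization

/-- The quotient topology on a projectivization. -/
noncomputable instance projTopology {K V : Type*} [DivisionRing K] [AddCommGroup V]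
    [Module K V] [TopologicalSpace V] : TopologicalSpace (ℙ K V) :=
  inferInstanceAs (TopologicalSpace (Quotient (projectivizationSetoid K V)))

/-- The ℤ-valued bilinear form of the lattice `Γ = ℤ^n` with Gram matrix `G`. -/
def formZ {n : ℕ} (G : Matrix (Fin n) (Fin n) ℤ) (x y : Fin n → ℤ) : ℤ :=
  x ⬝ᵥ (G *ᵥ y)

/-- The induced real bilinear form on `Γ_ℝ = ℝ^n`. -/
noncomputable def formR {n : ℕ} (G : Matrix (Fin n) (Fin n) ℤ) (x y : Fin n → ℝ) : ℝ :=
  x ⬝ᵥ ((G.map ((↑) : ℤ → ℝ)) *ᵥ y)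

/-- The ℂ-bilinear extension of the form to `(Γ_ℝ)_ℂ = ℂ^n`. -/
noncomputable def formC {n : ℕ} (G : Matrix (Fin n) (Fin n) ℤ) (x y : Fin n → ℂ) : ℂ :=
  x ⬝ᵥ ((G.map ((↑) : ℤ → ℂ)) *ᵥ y)

/-- `x ∈ Γ` is primitive: `x ≠ 0` and `x = m • y` implies `m = ±1`. -/
def IsPrimitive {n : ℕ} (x : Fin n → ℤ) : Prop :=
  x ≠ 0 ∧ ∀ (m : ℤ) (y : Fin n → ℤ), x = m • y → m = 1 ∨ m = -1

/-- The period domain `Q ⊂ ℙ((Γ_ℝ)_ℂ)`. -/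
def periodDomain {n : ℕ} (G : Matrix (Fin n) (Fin n) ℤ) : Set (ℙ ℂ (Fin n → ℂ)) :=
  {p | ∃ (z : Fin n → ℂ) (hz : z ≠ 0), p = Projectivization.mk ℂ z hz ∧
    formC G z z = 0 ∧ 0 < (formC G (z + star z) (z + star z)).re}

set_option maxHeartbeats 1000000

namespace NLDense

variable {n : ℕ} (G : Matrix (Fin n) (Fin n) ℤ)

noncomputable def BR : (Fin n → ℝ) →ₗ[ℝ] (Fin n → ℝ) →ₗ[ℝ] ℝ :=
  Matrix.toLinearMap₂' ℝ (G.map ((↑) : ℤ → ℝ))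

noncomputable def BC : (Fin n → ℂ) →ₗ[ℂ] (Fin n → ℂ) →ₗ[ℂ] ℂ :=
  Matrix.toLinearMap₂' ℂ (G.map ((↑) : ℤ → ℂ))

lemma formR_eq (x y : Fin n → ℝ) : formR G x y = BR G x y :=
  (Matrix.toLinearMap₂'_apply' _ _ _).symm

lemma formC_eq (x y : Fin n → ℂ) : formC G x y = BC G x y :=
  (Matrix.toLinearMap₂'_apply' _ _ _).symm

lemma formR_comm (hsymm : G.IsSymm) (x y : Fin n → ℝ) : formR G x y = formR G y x := by
  unfold formR
  rw [Matrix.dotProduct_mulVec, ← Matrix.mulVec_transpose,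
    show (G.map ((↑) : ℤ → ℝ))ᵀ = G.map ((↑) : ℤ → ℝ) from hsymm.map _,
    dotProduct_comm]

lemma formZ_comm (hsymm : G.IsSymm) (x y : Fin n → ℤ) : formZ G x y = formZ G y x := by
  unfold formZ
  rw [Matrix.dotProduct_mulVec, ← Matrix.mulVec_transpose,
    show Gᵀ = G from hsymm, dotProduct_comm]

/-- cast ℤ → ℝ vectors -/
def cZR (a : Fin n → ℤ) : Fin n → ℝ := fun i => (a i : ℝ)

def cRC (x : Fin n → ℝ) : Fin n → ℂ := fun i => (x i : ℂ)

lemma formR_cast (a b : Fin n → ℤ) : formR G (cZR a) (cZR b) = (formZ G a b : ℝ) := by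
  simp only [formR, formZ, cZR, dotProduct, Matrix.mulVec, Matrix.map_apply]
  push_cast
  rfl

lemma formC_cast (x y : Fin n → ℝ) : formC G (cRC x) (cRC y) = ((formR G x y : ℝ) : ℂ) := by
  simp only [formR, formC, cRC, dotProduct, Matrix.mulVec, Matrix.map_apply]
  push_cast
  rfl

lemma continuous_formR : Continuous (fun q : (Fin n → ℝ) × (Fin n → ℝ) => formR G q.1 q.2) := by
  simp only [formR, dotProduct, Matrix.mulVec]
  exact continuous_finset_sum _ fun i _ =>
    (((continuous_apply i).comp continuous_fst).mul
      (continuous_finset_sum _ fun j _ =>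
        continuous_const.mul ((continuous_apply j).comp continuous_snd)))

end NLDense

namespace NLDense

variable {n : ℕ} (G : Matrix (Fin n) (Fin n) ℤ)

lemma nondeg (hdet : ((G.map ((↑) : ℤ → ℝ))).det ≠ 0) (x : Fin n → ℝ)
    (h : ∀ y, formR G x y = 0) : x = 0 :=
  (Matrix.nondegenerate_of_det_ne_zero hdet).eq_zero_of_ortho h

lemma exists_pair_ne (hdet : ((G.map ((↑) : ℤ → ℝ))).det ≠ 0) {x : Fin n → ℝ}
    (hx : x ≠ 0) : ∃ y, formR G x y ≠ 0 := by
  by_contra h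
  push_neg at h
  exact hx (nondeg G hdet x h)

lemma exists_primitive_factor {x : Fin n → ℤ} (hx : x ≠ 0) :
    ∃ (d : ℤ) (e : Fin n → ℤ), d ≠ 0 ∧ IsPrimitive e ∧ x = d • e := by
  classical
  set d : ℤ := Finset.univ.gcd x with hd
  have hdvd : ∀ i, d ∣ x i := fun i => Finset.gcd_dvd (Finset.mem_univ i)
  have hdne : d ≠ 0 := by
    intro h0
    apply hx
    funext i
    exact Finset.gcd_eq_zero_iff.mp (hd ▸ h0) i (Finset.mem_univ i)
  refine ⟨d, fun i => x i / d, hdne, ⟨?_, ?_⟩, ?_⟩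
  · intro h0
    apply hx
    funext i
    have := congrFun h0 i
    simp only [Pi.zero_apply] at this ⊢
    have := Int.eq_mul_of_ediv_eq_right (hdvd i) this
    simpa using this
  · intro c y hcy
    have hx' : x = (d * c) • y := by
      funext i
      have h1 : x i / d = c * y i := congrFun hcy i
      have h2 : d * (x i / d) = x i := Int.mul_ediv_cancel' (hdvd i)
      have := h2.symm.trans (by rw [h1])
      simpa [mul_assoc] using this
    have hdc : d * c ∣ d := by
      rw [hd]
      refine Finset.dvd_gcd fun i _ => ?_
      exact ⟨y i, congrFun hx' i⟩
    have : c ∣ 1 := by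
      rcases hdc with ⟨k, hk⟩
      refine ⟨k, ?_⟩
      have := hk
      nth_rewrite 1 [show d = d * 1 from (mul_one d).symm] at this
      rw [mul_assoc] at this
      exact mul_left_cancel₀ hdne this
    exact Int.isUnit_iff.mp (isUnit_of_dvd_one this)
  · funext i
    exact (Int.mul_ediv_cancel' (hdvd i)).symm

lemma formZ_smul_left (c : ℤ) (x y : Fin n → ℤ) : formZ G (c • x) y = c * formZ G x y := by
  simp only [formZ, dotProduct, Pi.smul_apply, smul_eq_mul, Finset.mul_sum, mul_assoc]

lemma primitive_of_pair {a v : Fin n → ℤ} (h : formZ G a v = 1) : IsPrimitive a := by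
  constructor
  · intro h0
    rw [h0] at h
    simp [formZ, zero_dotProduct] at h
  · intro c y hcy
    rw [hcy, formZ_smul_left] at h
    exact Int.isUnit_iff.mp (isUnit_of_dvd_one ⟨formZ G y v, h.symm⟩)

end NLDense

namespace NLDense

open Complex

variable {n : ℕ} (G : Matrix (Fin n) (Fin n) ℤ)

/-- build a complex vector from real and imaginary parts -/
def zC (x y : Fin n → ℝ) : Fin n → ℂ := fun i => (x i : ℂ) + (y i : ℂ) * I

lemma zC_eq (x y : Fin n → ℝ) : zC x y = cRC x + I • cRC y := by
  funext i
  simp [zC, cRC, Pi.smul_apply, smul_eq_mul]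
  ring

lemma formC_zC (x y x' y' : Fin n → ℝ) :
    formC G (zC x y) (zC x' y') =
      ((formR G x x' - formR G y y' : ℝ) : ℂ)
        + ((formR G x y' + formR G y x' : ℝ) : ℂ) * I := by
  rw [zC_eq, zC_eq, formC_eq]
  simp only [map_add, _root_.map_smul, LinearMap.add_apply, LinearMap.smul_apply, smul_eq_mul]
  rw [← formC_eq, ← formC_eq, ← formC_eq, ← formC_eq]
  simp only [formC_cast]
  push_cast
  ring_nf
  simp [Complex.I_sq]
  ring

lemma star_zC (x y : Fin n → ℝ) : star (zC x y) = zC x (-y) := by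
  funext i
  simp [zC, Pi.star_apply, Complex.ext_iff]

lemma zC_self (z : Fin n → ℂ) : z = zC (fun i => (z i).re) (fun i => (z i).im) := by
  funext i
  simp [zC, Complex.re_add_im]

lemma zC_add (x y x' y' : Fin n → ℝ) : zC x y + zC x' y' = zC (x + x') (y + y') := by
  funext i
  simp [zC]
  ring

lemma zC_ne_zero {x : Fin n → ℝ} (y : Fin n → ℝ) (hx : x ≠ 0) : zC x y ≠ 0 := by
  intro h
  apply hx
  funext i
  have := congrFun h i
  simp only [zC, Pi.zero_apply] at this
  have : ((x i : ℂ) + (y i :ℂ) * I).re = 0 := by rw [this]; simp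
  simpa using this

end NLDense

namespace NLDense

variable {n : ℕ} (G : Matrix (Fin n) (Fin n) ℤ)

def BZ : (Fin n → ℤ) →ₗ[ℤ] (Fin n → ℤ) →ₗ[ℤ] ℤ :=
  Matrix.toLinearMap₂' ℤ G

lemma formZ_eq (x y : Fin n → ℤ) : formZ G x y = BZ G x y :=
  (Matrix.toLinearMap₂'_apply' _ _ _).symm

lemma cZR_add (a b : Fin n → ℤ) : cZR (a + b) = cZR a + cZR b := by
  funext i; simp [cZR]

lemma cZR_smul (c : ℤ) (a : Fin n → ℤ) : cZR (c • a) = (c : ℝ) • cZR a := by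
  funext i; simp [cZR]

lemma cZR_ne_zero {a : Fin n → ℤ} (ha : a ≠ 0) : cZR a ≠ 0 := by
  intro h
  apply ha
  funext i
  have := congrFun h i
  simp only [cZR, Pi.zero_apply] at this ⊢
  exact_mod_cast this

/-- expansion simp set -/
lemma formR_smul_left (c : ℝ) (x y : Fin n → ℝ) :
    formR G (c • x) y = c * formR G x y := by
  simp [formR_eq, _root_.map_smul, LinearMap.smul_apply]

lemma formR_smul_right (c : ℝ) (x y : Fin n → ℝ) :
    formR G x (c • y) = c * formR G x y := by
  simp [formR_eq, _root_.map_smul]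

lemma formR_add_left (x x' y : Fin n → ℝ) :
    formR G (x + x') y = formR G x y + formR G x' y := by
  simp [formR_eq, map_add, LinearMap.add_apply]

lemma formR_add_right (x y y' : Fin n → ℝ) :
    formR G x (y + y') = formR G x y + formR G x y' := by
  simp [formR_eq, map_add]

lemma formR_sub_left (x x' y : Fin n → ℝ) :
    formR G (x - x') y = formR G x y - formR G x' y := by
  simp [formR_eq, map_sub, LinearMap.sub_apply]

lemma formR_sub_right (x y y' : Fin n → ℝ) :
    formR G x (y - y') = formR G x y - formR G x y' := by
  simp [formR_eq, map_sub]

lemma formR_zero_left (y : Fin n → ℝ) : formR G 0 y = 0 := by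
  simp [formR_eq, map_zero, LinearMap.zero_apply]

lemma formR_zero_right (x : Fin n → ℝ) : formR G x 0 = 0 := by
  simp [formR_eq, map_zero]

lemma formR_neg_left (x y : Fin n → ℝ) : formR G (-x) y = - formR G x y := by
  simp [formR_eq, map_neg, LinearMap.neg_apply]

lemma formR_neg_right (x y : Fin n → ℝ) : formR G x (-y) = - formR G x y := by
  simp [formR_eq, map_neg]

lemma formZ_smul_right (c : ℤ) (x y : Fin n → ℤ) :
    formZ G x (c • y) = c * formZ G x y := by
  rw [formZ_eq, _root_.map_smul, smul_eq_mul, formZ_eq]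

lemma formZ_add_left (x x' y : Fin n → ℤ) :
    formZ G (x + x') y = formZ G x y + formZ G x' y := by
  simp [formZ_eq, map_add, LinearMap.add_apply]

lemma formZ_add_right (x y y' : Fin n → ℤ) :
    formZ G x (y + y') = formZ G x y + formZ G x y' := by
  simp [formZ_eq, map_add]

lemma formZ_sub_left (x x' y : Fin n → ℤ) :
    formZ G (x - x') y = formZ G x y - formZ G x' y := by
  simp [formZ_eq, map_sub, LinearMap.sub_apply]

lemma formZ_sub_right (x y y' : Fin n → ℤ) :
    formZ G x (y - y') = formZ G x y - formZ G x y' := by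
  simp [formZ_eq, map_sub]

end NLDense

namespace NLDense

variable {n : ℕ} (G : Matrix (Fin n) (Fin n) ℤ)

lemma cZR_sub (a b : Fin n → ℤ) : cZR (a - b) = cZR a - cZR b := by
  funext i; simp [cZR]

lemma exists_w0 (hn : 4 ≤ n) (hsymm : G.IsSymm)
    (hdet : ((G.map ((↑) : ℤ → ℝ))).det ≠ 0) {e e' : Fin n → ℤ}
    (he : formZ G e e = 0) (he' : formZ G e' e' = 0) (hee' : formZ G e e' = 1) :
    ∃ w : Fin n → ℤ, formZ G w e = 0 ∧ formZ G w e' = 0 ∧ formZ G w w ≠ 0 := by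
  by_contra hcon
  push_neg at hcon
  have he'e : formZ G e' e = 1 := by rw [formZ_comm G hsymm]; exact hee'
  set πz : (Fin n → ℤ) → (Fin n → ℤ) :=
    fun x => x - formZ G x e' • e - formZ G x e • e' with hπz
  have hπe : ∀ x, formZ G (πz x) e = 0 := by
    intro x
    simp only [hπz, formZ_sub_left, formZ_smul_left, he, he'e]
    ring
  have hπe' : ∀ x, formZ G (πz x) e' = 0 := by
    intro x
    simp only [hπz, formZ_sub_left, formZ_smul_left, he', hee']
    ring
  have hadd : ∀ x y, πz x + πz y = πz (x + y) := by
    intro x y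
    simp only [hπz, formZ_add_left, add_smul]
    abel
  have hππ : ∀ x y, formZ G (πz x) (πz y) = 0 := by
    intro x y
    have h1 := hcon (πz x) (hπe x) (hπe' x)
    have h2 := hcon (πz y) (hπe y) (hπe' y)
    have h3 := hcon (πz (x + y)) (hπe _) (hπe' _)
    rw [← hadd] at h3
    rw [formZ_add_left, formZ_add_right, formZ_add_right] at h3
    have hsym := formZ_comm G hsymm (πz x) (πz y)
    omega
  have heR : formR G (cZR e) (cZR e) = 0 := by rw [formR_cast, he]; norm_num
  have he'R : formR G (cZR e') (cZR e') = 0 := by rw [formR_cast, he']; norm_num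
  have hee'R : formR G (cZR e) (cZR e') = 1 := by rw [formR_cast, hee']; norm_num
  have he'eR : formR G (cZR e') (cZR e) = 1 := by rw [formR_cast, he'e]; norm_num
  set eR := cZR e with heRdef
  set e'R := cZR e' with he'Rdef
  set πr : (Fin n → ℝ) →ₗ[ℝ] (Fin n → ℝ) :=
    LinearMap.id - (LinearMap.toSpanSingleton ℝ _ eR).comp ((BR G).flip e'R)
      - (LinearMap.toSpanSingleton ℝ _ e'R).comp ((BR G).flip eR) with hπr
  have hπrapp : ∀ x, πr x = x - formR G x e'R • eR - formR G x eR • e'R := by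
    intro x
    simp only [hπr, LinearMap.sub_apply, LinearMap.comp_apply,
      LinearMap.toSpanSingleton_apply, LinearMap.flip_apply, LinearMap.id_apply]
    rw [← formR_eq, ← formR_eq]
  have hstd : ∀ i : Fin n, (Pi.basisFun ℝ (Fin n)) i = cZR (Pi.single i 1) := by
    intro i
    funext j
    simp [Pi.basisFun_apply, cZR, Pi.single_apply, apply_ite]
  have hπr_cast : ∀ a : Fin n → ℤ, πr (cZR a) = cZR (πz a) := by
    intro a
    rw [hπrapp, hπz]
    simp only [cZR_sub, cZR_smul]
    rw [heRdef, he'Rdef, formR_cast, formR_cast]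
  have hΦ0 : (BR G).compl₁₂ πr πr = 0 := by
    apply LinearMap.ext_basis (Pi.basisFun ℝ (Fin n)) (Pi.basisFun ℝ (Fin n))
    intro i j
    rw [LinearMap.compl₁₂_apply, hstd, hstd, hπr_cast, hπr_cast, ← formR_eq, formR_cast,
      hππ]
    simp
  have hπr0 : ∀ x, πr x = 0 := by
    intro x
    apply nondeg G hdet
    intro y
    have hxe : formR G (πr x) eR = 0 := by
      rw [hπrapp, formR_sub_left, formR_sub_left, formR_smul_left, formR_smul_left,
        heR, he'eR]
      ring
    have hxe' : formR G (πr x) e'R = 0 := by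
      rw [hπrapp, formR_sub_left, formR_sub_left, formR_smul_left, formR_smul_left,
        he'R, hee'R]
      ring
    have hφ : formR G (πr x) (πr y) = 0 := by
      rw [formR_eq]
      have h := LinearMap.congr_fun (LinearMap.congr_fun hΦ0 x) y
      rw [LinearMap.compl₁₂_apply] at h
      simpa using h
    have hdecomp : y = formR G y e'R • eR + formR G y eR • e'R + πr y := by
      rw [hπrapp]
      abel
    rw [hdecomp, formR_add_right, formR_add_right, formR_smul_right, formR_smul_right,
      hxe, hxe', hφ]
    ring
  have hspan : ∀ x : Fin n → ℝ, x ∈ Submodule.span ℝ ({eR, e'R} : Set (Fin n → ℝ)) := by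
    intro x
    have h0 := hπr0 x
    rw [hπrapp, sub_sub, sub_eq_zero] at h0
    rw [h0]
    exact Submodule.add_mem _
      (Submodule.smul_mem _ _ (Submodule.subset_span (by simp)))
      (Submodule.smul_mem _ _ (Submodule.subset_span (by simp)))
  have htop : (⊤ : Submodule ℝ (Fin n → ℝ)) ≤ Submodule.span ℝ ({eR, e'R} : Set _) :=
    fun x _ => hspan x
  have h1 : Module.finrank ℝ (Fin n → ℝ) ≤
      Module.finrank ℝ (Submodule.span ℝ ({eR, e'R} : Set (Fin n → ℝ))) := by
    conv_lhs => rw [← finrank_top ℝ (Fin n → ℝ)]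
    exact Submodule.finrank_mono htop
  have h2 : Module.finrank ℝ (Submodule.span ℝ ({eR, e'R} : Set (Fin n → ℝ))) ≤ 2 := by
    classical
    refine (finrank_span_le_card _).trans ?_
    have : ({eR, e'R} : Set (Fin n → ℝ)).toFinset ⊆ {eR, e'R} := by
      intro z hz
      simp only [Set.mem_toFinset] at hz
      simpa using hz
    refine (Finset.card_le_card this).trans ?_
    exact (Finset.card_insert_le _ _).trans (by simp)
  rw [Module.finrank_fin_fun] at h1
  omega

end NLDense

namespace NLDense

open Filter Topology

variable {n : ℕ} (G : Matrix (Fin n) (Fin n) ℤ)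

lemma approx_e (hn : 4 ≤ n) (hsymm : G.IsSymm)
    (hdet : ((G.map ((↑) : ℤ → ℝ))).det ≠ 0)
    (heven : ∀ x : Fin n → ℤ, 2 ∣ formZ G x x)
    {e e' : Fin n → ℤ}
    (he : formZ G e e = 0) (he' : formZ G e' e' = 0) (hee' : formZ G e e' = 1)
    (m : ℤ) {ε : ℝ} (hε : 0 < ε) :
    ∃ (α : Fin n → ℤ) (lam : ℝ), IsPrimitive α ∧ formZ G α α = 2 * m ∧ lam ≠ 0 ∧
      ‖lam⁻¹ • cZR α - cZR e‖ < ε := by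
  obtain ⟨w, hwe, hwe', hww⟩ := exists_w0 G hn hsymm hdet he he' hee'
  obtain ⟨s, hs⟩ := heven w
  have hsne : s ≠ 0 := by
    intro h0; rw [h0, mul_zero] at hs; exact hww hs
  have he'e : formZ G e' e = 1 := by rw [formZ_comm G hsymm]; exact hee'
  have hew : formZ G e w = 0 := by rw [formZ_comm G hsymm]; exact hwe
  have he'w : formZ G e' w = 0 := by rw [formZ_comm G hsymm]; exact hwe'
  set α : ℕ → (Fin n → ℤ) :=
    fun k => (k : ℤ) • w + ((m : ℤ) - (k : ℤ)^2 * s) • e + e' with hα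
  have hsq : ∀ k, formZ G (α k) (α k) = 2 * m := by
    intro k
    simp only [hα, formZ_add_left, formZ_add_right, formZ_smul_left, formZ_smul_right,
      hs, he, he', hee', he'e, hew, he'w, hwe, hwe']
    ring
  have hprim : ∀ k, IsPrimitive (α k) := by
    intro k
    apply primitive_of_pair G (v := e)
    simp only [hα, formZ_add_left, formZ_smul_left, he, hwe, he'e]
    ring
  set lam : ℕ → ℝ := fun k => ((m : ℤ) - (k : ℤ)^2 * s : ℤ) with hlamdef
  have hlam_cast : ∀ k : ℕ, lam k = (m : ℝ) - (k : ℝ)^2 * (s : ℝ) := by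
    intro k; simp only [hlamdef]; push_cast; ring
  have hcast : ∀ k : ℕ, cZR (α k)
      = (k : ℝ) • cZR w + lam k • cZR e + cZR e' := by
    intro k
    simp only [hα, cZR_add, cZR_smul, hlamdef]
    norm_cast
  -- eventually lam k ≠ 0
  have E1 : ∀ᶠ k : ℕ in atTop, lam k ≠ 0 := by
    rw [eventually_atTop]
    refine ⟨m.natAbs + 1, fun k hk => ?_⟩
    simp only [hlamdef, ne_eq, Int.cast_eq_zero, sub_eq_zero]
    intro heq
    have habs : |m| = (k : ℤ)^2 * |s| := by
      rw [heq, abs_mul, abs_of_nonneg (sq_nonneg ((k : ℤ)))]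
    have h1 : (1 : ℤ) ≤ |s| := Int.one_le_abs (by exact_mod_cast hsne)
    have h2 : (m.natAbs : ℤ) + 1 ≤ (k : ℤ) := by exact_mod_cast hk
    have h3 : |m| = (m.natAbs : ℤ) := Int.abs_eq_natAbs m
    nlinarith [sq_nonneg ((k : ℤ) - 1)]
  -- tendsto of the correction
  have t1 : Tendsto (fun k : ℕ => ((k : ℝ))^2) atTop atTop :=
    (tendsto_pow_atTop two_ne_zero).comp tendsto_natCast_atTop_atTop
  have t2 : Tendsto (fun k : ℕ => (m : ℝ) / ((k : ℝ))^2) atTop (𝓝 0) :=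
    Tendsto.div_atTop tendsto_const_nhds t1
  have t3 : Tendsto (fun k : ℕ => lam k / ((k : ℝ))^2) atTop (𝓝 (0 - (s : ℝ))) := by
    apply Tendsto.congr' _ (t2.sub tendsto_const_nhds)
    filter_upwards [eventually_ne_atTop 0] with k hk
    have hk' : ((k : ℝ))^2 ≠ 0 := by positivity
    rw [hlam_cast]
    field_simp
  have hsR : (0 : ℝ) - (s : ℝ) ≠ 0 := by
    simp only [zero_sub, ne_eq, neg_eq_zero, Int.cast_eq_zero]
    exact hsne
  have t4 : Tendsto (fun k : ℕ => (lam k / ((k : ℝ))^2)⁻¹) atTop (𝓝 ((0 - (s:ℝ))⁻¹)) :=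
    t3.inv₀ hsR
  have ti : Tendsto (fun k : ℕ => ((k : ℝ))⁻¹) atTop (𝓝 0) :=
    tendsto_inv_atTop_zero.comp tendsto_natCast_atTop_atTop
  have ti2 : Tendsto (fun k : ℕ => (((k : ℝ))^2)⁻¹) atTop (𝓝 0) := by
    exact t1.inv_tendsto_atTop
  have u1 : Tendsto (fun k : ℕ => (k : ℝ) / lam k) atTop (𝓝 0) := by
    have hm := ti.mul t4
    rw [zero_mul] at hm
    apply Tendsto.congr' _ hm
    filter_upwards [eventually_ne_atTop 0] with k hk
    have hk' : (k : ℝ) ≠ 0 := Nat.cast_ne_zero.mpr hk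
    rcases eq_or_ne (lam k) 0 with h | h
    · simp [h]
    · field_simp
  have u2 : Tendsto (fun k : ℕ => (lam k)⁻¹) atTop (𝓝 0) := by
    have hm := ti2.mul t4
    rw [zero_mul] at hm
    apply Tendsto.congr' _ hm
    filter_upwards [eventually_ne_atTop 0] with k hk
    have hk' : (k : ℝ) ≠ 0 := Nat.cast_ne_zero.mpr hk
    rcases eq_or_ne (lam k) 0 with h | h
    · simp [h]
    · field_simp
  have vt : Tendsto (fun k : ℕ => ((k : ℝ) / lam k) • cZR w + (lam k)⁻¹ • cZR e')
      atTop (𝓝 0) := by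
    have := (u1.smul_const (cZR w)).add (u2.smul_const (cZR e'))
    simpa using this
  have key : Tendsto (fun k : ℕ => (lam k)⁻¹ • cZR (α k) - cZR e) atTop (𝓝 0) := by
    apply Tendsto.congr' _ vt
    filter_upwards [E1] with k hk
    rw [hcast k, smul_add, smul_add, smul_smul, smul_smul, inv_mul_cancel₀ hk, one_smul]
    rw [div_eq_inv_mul]
    abel
  have : ∀ᶠ k : ℕ in atTop, ‖(lam k)⁻¹ • cZR (α k) - cZR e‖ < ε := by
    have := (Metric.tendsto_nhds.mp key) ε hε
    filter_upwards [this] with k hk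
    rwa [dist_zero_right] at hk
  obtain ⟨k, hk1, hk2⟩ := (this.and E1).exists
  exact ⟨α k, lam k, hprim k, hsq k, hk2, hk1⟩

end NLDense

namespace NLDense

open Filter Topology

variable {n : ℕ} (G : Matrix (Fin n) (Fin n) ℤ)

lemma tendsto_formR {f g : ℕ → Fin n → ℝ} {L M : Fin n → ℝ}
    (hf : Tendsto f atTop (𝓝 L)) (hg : Tendsto g atTop (𝓝 M)) :
    Tendsto (fun k => formR G (f k) (g k)) atTop (𝓝 (formR G L M)) := by
  have h1 : Tendsto (fun k => (f k, g k)) atTop (𝓝 (L, M)) := hf.prodMk_nhds hg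
  have h2 : Tendsto (fun q : (Fin n → ℝ) × (Fin n → ℝ) => formR G q.1 q.2)
      (𝓝 (L, M)) (𝓝 (formR G L M)) := (continuous_formR G).tendsto (L, M)
  exact h2.comp h1

lemma approx_beta (hsymm : G.IsSymm) {v : Fin n → ℤ} (hv : formZ G v v = 0)
    {β : Fin n → ℝ} (hβ : β ≠ 0) (hqβ : formR G β β = 0)
    (hsβ : formR G (cZR v) β ≠ 0) {ε : ℝ} (hε : 0 < ε) :
    ∃ (e : Fin n → ℤ) (μ : ℝ), IsPrimitive e ∧ formZ G e e = 0 ∧ μ ≠ 0 ∧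
      ‖μ⁻¹ • cZR e - β‖ < ε := by
  classical
  set c : ℕ → (Fin n → ℤ) := fun k i => ⌊(k : ℝ) * β i⌋ with hc
  set p : ℕ → (Fin n → ℝ) := fun k => ((k : ℝ))⁻¹ • cZR (c k) with hp
  have hpk : ∀ k : ℕ, k ≠ 0 → ∀ i, |p k i - β i| ≤ 1 / (k : ℝ) := by
    intro k hk i
    have hk' : (0 : ℝ) < (k : ℝ) := by positivity
    have h1 : ((⌊(k : ℝ) * β i⌋ : ℝ)) ≤ (k : ℝ) * β i := Int.floor_le _
    have h2 : (k : ℝ) * β i < (⌊(k : ℝ) * β i⌋ : ℝ) + 1 := Int.lt_floor_add_one _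
    have hpe : p k i - β i = ((⌊(k : ℝ) * β i⌋ : ℝ) - (k : ℝ) * β i) / (k : ℝ) := by
      simp only [hp, hc, Pi.smul_apply, smul_eq_mul, cZR]
      field_simp
    rw [hpe, abs_div, abs_of_pos hk', div_le_div_iff_of_pos_right hk']
    rw [abs_le]
    constructor <;> linarith
  have hptend : Tendsto p atTop (𝓝 β) := by
    rw [tendsto_pi_nhds]
    intro i
    have : Tendsto (fun k : ℕ => p k i - β i) atTop (𝓝 0) := by
      apply squeeze_zero_norm' _ tendsto_one_div_atTop_nhds_zero_nat
      filter_upwards [eventually_ne_atTop 0] with k hk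
      exact hpk k hk i
    have := this.add (tendsto_const_nhds (x := β i))
    simpa using this
  have hs : Tendsto (fun k => formR G (cZR v) (p k)) atTop (𝓝 (formR G (cZR v) β)) :=
    tendsto_formR G tendsto_const_nhds hptend
  have hq : Tendsto (fun k => formR G (p k) (p k)) atTop (𝓝 0) := by
    have := tendsto_formR G hptend hptend
    rwa [hqβ] at this
  -- the normalized approximations
  have hEt : Tendsto (fun k => p k - (formR G (p k) (p k) / (2 * formR G (cZR v) (p k)))
      • cZR v) atTop (𝓝 β) := by
    have hdiv : Tendsto (fun k => formR G (p k) (p k) / (2 * formR G (cZR v) (p k)))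
        atTop (𝓝 (0 / (2 * formR G (cZR v) β))) :=
      hq.div (tendsto_const_nhds.mul hs) (by simpa using hsβ)
    rw [zero_div] at hdiv
    have := hptend.sub (hdiv.smul_const (cZR v))
    simpa using this
  have hβnorm : 0 < ‖β‖ := norm_pos_iff.mpr hβ
  have hev : ∀ᶠ k : ℕ in atTop,
      (k ≠ 0 ∧ formR G (cZR v) (p k) ≠ 0) ∧
      dist (p k - (formR G (p k) (p k) / (2 * formR G (cZR v) (p k))) • cZR v) β
        < min ε ‖β‖ := by
    have h1 : ∀ᶠ k : ℕ in atTop, formR G (cZR v) (p k) ≠ 0 := hs.eventually_ne hsβ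
    have h2 := (Metric.tendsto_nhds.mp hEt) _ (lt_min hε hβnorm)
    filter_upwards [h1, h2, eventually_ne_atTop 0] with k ha hb hc'
    exact ⟨⟨hc', ha⟩, hb⟩
  obtain ⟨k, ⟨hk0, hsk⟩, hdk⟩ := hev.exists
  set sk := formR G (cZR v) (p k) with hskdef
  set qk := formR G (p k) (p k) with hqkdef
  set et : Fin n → ℤ := formZ G (c k) (c k) • v - (2 * formZ G v (c k)) • c k with het
  have hkR : ((k : ℝ)) ≠ 0 := Nat.cast_ne_zero.mpr hk0
  -- isotropy of et
  have hiso : formZ G et et = 0 := by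
    have hcomm : formZ G (c k) v = formZ G v (c k) := formZ_comm G hsymm _ _
    simp only [het, formZ_sub_left, formZ_sub_right, formZ_smul_left, formZ_smul_right,
      hv, hcomm]
    ring
  -- real identities
  have hcp : cZR (c k) = (k : ℝ) • p k := by
    rw [hp]
    rw [smul_smul, mul_inv_cancel₀ hkR, one_smul]
  have hzc : (formZ G (c k) (c k) : ℝ) = (k : ℝ)^2 * qk := by
    rw [← formR_cast, hcp, formR_smul_left, formR_smul_right, hqkdef]
    ring
  have hzv : (formZ G v (c k) : ℝ) = (k : ℝ) * sk := by
    rw [← formR_cast, hcp, formR_smul_right, hskdef]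
  have hmu0 : (-(2 * (k : ℝ)^2 * sk)) ≠ 0 :=
    neg_ne_zero.mpr (mul_ne_zero (mul_ne_zero two_ne_zero (pow_ne_zero _ hkR)) hsk)
  have hsk2 : (2 : ℝ) * sk ≠ 0 := by
    intro h0
    apply hsk
    linarith [h0]
  have hEeq : (-(2 * (k : ℝ)^2 * sk))⁻¹ • cZR et = p k - (qk / (2 * sk)) • cZR v := by
    rw [het, cZR_sub, cZR_smul, cZR_smul]
    push_cast
    rw [hzc, hzv, hcp]
    match_scalars
    · field_simp
    · field_simp
  -- et nonzero
  have hetne : et ≠ 0 := by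
    intro h0
    rw [h0] at hEeq
    have : cZR (0 : Fin n → ℤ) = (0 : Fin n → ℝ) := by funext i; simp [cZR]
    rw [this, smul_zero] at hEeq
    rw [← hEeq, dist_comm, dist_zero_right] at hdk
    exact absurd (hdk.trans_le (min_le_right _ _)) (lt_irrefl _)
  obtain ⟨d, e, hd, hprim, hfac⟩ := exists_primitive_factor hetne
  have hiso' : formZ G e e = 0 := by
    have h0 : formZ G et et = d^2 * formZ G e e := by
      rw [hfac, formZ_smul_left, formZ_smul_right]
      ring
    rw [hiso] at h0
    have hd2 : d^2 ≠ 0 := pow_ne_zero _ hd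
    exact (mul_eq_zero.mp h0.symm).resolve_left hd2
  refine ⟨e, (-(2 * (k : ℝ)^2 * sk)) / (d : ℝ), hprim, hiso', ?_, ?_⟩
  · apply div_ne_zero hmu0
    exact_mod_cast hd
  · have hdR : ((d : ℝ)) ≠ 0 := by exact_mod_cast hd
    have hswap : ((-(2 * (k : ℝ)^2 * sk)) / (d : ℝ))⁻¹ • cZR e
        = (-(2 * (k : ℝ)^2 * sk))⁻¹ • cZR et := by
      rw [hfac, cZR_smul, smul_smul, inv_div, div_eq_inv_mul]
    rw [hswap, hEeq, ← dist_eq_norm]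
    exact hdk.trans_le (min_le_left _ _)

end NLDense

namespace NLDense

open Filter Topology Module Submodule

variable {n : ℕ} (G : Matrix (Fin n) (Fin n) ℤ)

lemma formR_sum_left {ι : Type*} (s : Finset ι) (f : ι → (Fin n → ℝ)) (y : Fin n → ℝ) :
    formR G (∑ i ∈ s, f i) y = ∑ i ∈ s, formR G (f i) y := by
  rw [formR_eq, map_sum, LinearMap.sum_apply]
  simp only [formR_eq]

lemma formR_sum_right {ι : Type*} (s : Finset ι) (x : Fin n → ℝ) (f : ι → (Fin n → ℝ)) :
    formR G x (∑ i ∈ s, f i) = ∑ i ∈ s, formR G x (f i) := by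
  rw [formR_eq, map_sum]
  simp only [formR_eq]

lemma orth4 (hsymm : G.IsSymm)
    (hmax : ∀ F : Submodule ℝ (Fin n → ℝ),
      (∀ x ∈ F, x ≠ 0 → 0 < formR G x x) → Module.finrank ℝ F ≤ 3)
    {x0 y0 xp u : Fin n → ℝ}
    (h01 : formR G x0 y0 = 0) (h02 : formR G x0 xp = 0) (h03 : formR G x0 u = 0)
    (h12 : formR G y0 xp = 0) (h13 : formR G y0 u = 0) (h23 : formR G xp u = 0)
    (hq0 : 0 < formR G x0 x0) (hq1 : 0 < formR G y0 y0)
    (hq2 : 0 < formR G xp xp) (hq3 : 0 < formR G u u) : False := by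
  classical
  have sym : ∀ a b, formR G a b = formR G b a := formR_comm G hsymm
  set V : Fin 4 → (Fin n → ℝ) := ![x0, y0, xp, u] with hV
  have horth : ∀ i j, i ≠ j → formR G (V i) (V j) = 0 := by
    intro i j hij
    fin_cases i <;> fin_cases j <;>
      simp_all [hV, Matrix.cons_val_zero, Matrix.cons_val_one, Matrix.head_cons] <;>
      first
        | assumption
        | (rw [sym]; assumption)
  have hq : ∀ i, 0 < formR G (V i) (V i) := by
    intro i
    fin_cases i <;>
      simpa [hV, Matrix.cons_val_zero, Matrix.cons_val_one, Matrix.head_cons] using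
        (by assumption : _)
  have hLI : LinearIndependent ℝ V := by
    rw [Fintype.linearIndependent_iff]
    intro g hg i
    have h0 : formR G (∑ j, g j • V j) (V i) = 0 := by rw [hg, formR_zero_left]
    rw [formR_sum_left] at h0
    rw [Finset.sum_eq_single i] at h0
    · rw [formR_smul_left] at h0
      rcases mul_eq_zero.mp h0 with h | h
      · exact h
      · exact absurd h (ne_of_gt (hq i))
    · intro j _ hj
      rw [formR_smul_left, horth j i hj, mul_zero]
    · intro h; exact absurd (Finset.mem_univ i) h
  have hrank : Module.finrank ℝ (span ℝ (Set.range V)) = 4 := by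
    rw [finrank_span_eq_card hLI]
    simp
  have hposF : ∀ x ∈ span ℝ (Set.range V), x ≠ 0 → 0 < formR G x x := by
    intro x hx hxne
    rw [mem_span_range_iff_exists_fun] at hx
    obtain ⟨cc, hc⟩ := hx
    have hqx : formR G x x = ∑ i, (cc i)^2 * formR G (V i) (V i) := by
      rw [← hc, formR_sum_left]
      refine Finset.sum_congr rfl fun i _ => ?_
      rw [formR_smul_left, formR_sum_right]
      rw [Finset.sum_eq_single i]
      · rw [formR_smul_right]; ring
      · intro j _ hj
        rw [formR_smul_right, horth i j (Ne.symm hj), mul_zero]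
      · intro h; exact absurd (Finset.mem_univ i) h
    have hcne : ∃ i, cc i ≠ 0 := by
      by_contra hall
      push_neg at hall
      apply hxne
      rw [← hc]
      refine Finset.sum_eq_zero fun i _ => ?_
      rw [hall i, zero_smul]
    obtain ⟨i0, hi0⟩ := hcne
    rw [hqx]
    apply Finset.sum_pos' (fun i _ => mul_nonneg (sq_nonneg _) (le_of_lt (hq i)))
    exact ⟨i0, Finset.mem_univ i0, mul_pos (by positivity) (hq i0)⟩
  have := hmax _ hposF
  rw [hrank] at this
  norm_num at this

end NLDense

namespace NLDense

open Filter Topology Module Submodule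

variable {n : ℕ} (G : Matrix (Fin n) (Fin n) ℤ)

lemma exists_beta (hn : 4 ≤ n) (hsymm : G.IsSymm)
    (hdet : ((G.map ((↑) : ℤ → ℝ))).det ≠ 0)
    (hsig : ∃ F : Submodule ℝ (Fin n → ℝ), Module.finrank ℝ F = 3 ∧
      ∀ x ∈ F, x ≠ 0 → 0 < formR G x x)
    (hmax : ∀ F : Submodule ℝ (Fin n → ℝ),
      (∀ x ∈ F, x ≠ 0 → 0 < formR G x x) → Module.finrank ℝ F ≤ 3)
    {x0 y0 : Fin n → ℝ}
    (hQ : 0 < formR G x0 x0) (hq01 : formR G x0 x0 = formR G y0 y0)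
    (hxy : formR G x0 y0 = 0)
    {vR : Fin n → ℝ} (hvq : formR G vR vR = 0) (hvne : vR ≠ 0) :
    ∃ β : Fin n → ℝ, formR G β x0 = 0 ∧ formR G β y0 = 0 ∧ formR G β β = 0 ∧
      formR G vR β ≠ 0 := by
  classical
  have sym : ∀ a b, formR G a b = formR G b a := formR_comm G hsymm
  -- finrank helpers
  have hfintop : Module.finrank ℝ (Fin n → ℝ) = n := Module.finrank_fin_fun ℝ
  have hker : ∀ c : Fin n → ℝ, (n : ℕ) ≤ Module.finrank ℝ (LinearMap.ker (BR G c)) + 1 := by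
    intro c
    have h1 := LinearMap.finrank_range_add_finrank_ker (BR G c)
    rw [hfintop] at h1
    have h2 : Module.finrank ℝ (LinearMap.range (BR G c)) ≤ 1 := by
      have := Submodule.finrank_le (LinearMap.range (BR G c))
      rwa [Module.finrank_self] at this
    omega
  have hinf : ∀ s t : Submodule ℝ (Fin n → ℝ),
      Module.finrank ℝ s + Module.finrank ℝ t ≤ n + Module.finrank ℝ (s ⊓ t : Submodule ℝ _) := by
    intro s t
    have h1 := Submodule.finrank_sup_add_finrank_inf_eq s t
    have h2 : Module.finrank ℝ (s ⊔ t : Submodule ℝ _) ≤ n := by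
      have := Submodule.finrank_le (s ⊔ t)
      rwa [hfintop] at this
    omega
  set W : Submodule ℝ (Fin n → ℝ) := LinearMap.ker (BR G x0) ⊓ LinearMap.ker (BR G y0)
    with hW
  have hWmem : ∀ w, w ∈ W ↔ formR G x0 w = 0 ∧ formR G y0 w = 0 := by
    intro w
    rw [hW, Submodule.mem_inf, LinearMap.mem_ker, LinearMap.mem_ker, ← formR_eq, ← formR_eq]
  have hWrank : (n : ℕ) ≤ Module.finrank ℝ W + 2 := by
    have h0 := hinf (LinearMap.ker (BR G x0)) (LinearMap.ker (BR G y0))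
    rw [← hW] at h0
    have h1 := hker x0
    have h2 := hker y0
    omega
  -- positive vector in W
  obtain ⟨F, hF3, hFpos⟩ := hsig
  have hFW : 1 ≤ Module.finrank ℝ (F ⊓ W : Submodule ℝ _) := by
    have := hinf F W
    rw [hF3] at this
    omega
  obtain ⟨xps, hxpsne⟩ := Module.finrank_pos_iff_exists_ne_zero.mp
    (lt_of_lt_of_le zero_lt_one hFW)
  set xp : Fin n → ℝ := (xps : Fin n → ℝ) with hxp
  have hxpne : xp ≠ 0 := by
    intro h0
    apply hxpsne
    exact Subtype.ext h0
  have hxpF : xp ∈ F := (Submodule.mem_inf.mp xps.2).1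
  have hxpW : xp ∈ W := (Submodule.mem_inf.mp xps.2).2
  obtain ⟨hx0xp, hy0xp⟩ := (hWmem xp).mp hxpW
  have hqxp : 0 < formR G xp xp := hFpos xp hxpF hxpne
  have hQy : 0 < formR G y0 y0 := hq01 ▸ hQ
  -- negativity lemma
  have hneg : ∀ w, formR G x0 w = 0 → formR G y0 w = 0 → formR G xp w = 0 →
      w ≠ 0 → formR G w w < 0 := by
    intro w h1 h2 h3 hw
    rcases lt_trichotomy (formR G w w) 0 with h | h | h
    · exact h
    · exfalso
      obtain ⟨t, ht⟩ := exists_pair_ne G hdet hw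
      set t1 : Fin n → ℝ := t - (formR G x0 t / formR G x0 x0) • x0
        - (formR G y0 t / formR G y0 y0) • y0
        - (formR G xp t / formR G xp xp) • xp with ht1
      have hx0t1 : formR G x0 t1 = 0 := by
        rw [ht1]
        simp only [formR_sub_right, formR_smul_right]
        rw [hxy, hx0xp]
        field_simp
        ring
      have hy0t1 : formR G y0 t1 = 0 := by
        rw [ht1]
        simp only [formR_sub_right, formR_smul_right]
        rw [sym y0 x0, hxy, hy0xp]
        field_simp
        ring
      have hxpt1 : formR G xp t1 = 0 := by
        rw [ht1]
        simp only [formR_sub_right, formR_smul_right]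
        rw [sym xp x0, sym xp y0, hx0xp, hy0xp]
        field_simp
        ring
      have hwt1 : formR G w t1 = formR G w t := by
        rw [ht1]
        simp only [formR_sub_right, formR_smul_right]
        rw [sym w x0, sym w y0, sym w xp, h1, h2, h3]
        ring
      set τ : ℝ := (1 - formR G t1 t1) / (2 * formR G w t) with hτ
      set w2 : Fin n → ℝ := t1 + τ • w with hw2
      have hwt : formR G w t ≠ 0 := ht
      have hqw2 : formR G w2 w2 = 1 := by
        rw [hw2]
        simp only [formR_add_left, formR_add_right, formR_smul_left, formR_smul_right]
        rw [h, sym t1 w, hwt1, hτ]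
        field_simp
        ring
      have hx0w2 : formR G x0 w2 = 0 := by
        rw [hw2, formR_add_right, formR_smul_right, hx0t1, h1]; ring
      have hy0w2 : formR G y0 w2 = 0 := by
        rw [hw2, formR_add_right, formR_smul_right, hy0t1, h2]; ring
      have hxpw2 : formR G xp w2 = 0 := by
        rw [hw2, formR_add_right, formR_smul_right, hxpt1, h3]; ring
      have hw2ne : w2 ≠ 0 := by
        intro h0
        rw [h0, formR_zero_left] at hqw2
        norm_num at hqw2
      exact orth4 G hsymm hmax hxy hx0xp hx0w2 hy0xp hy0w2 hxpw2 hQ hQy hqxp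
        (by rw [hqw2]; norm_num)
    · exact absurd (orth4 G hsymm hmax hxy hx0xp h1 hy0xp h2 h3 hQ hQy hqxp h) id
  -- builder for isotropic vectors in the right subspace
  have build : ∀ u : Fin n → ℝ, formR G x0 u = 0 → formR G y0 u = 0 → formR G xp u = 0 →
      formR G u u < 0 →
      ∃ β, formR G β x0 = 0 ∧ formR G β y0 = 0 ∧ formR G β β = 0 ∧
        formR G vR β = Real.sqrt (-formR G u u) * formR G vR xp
          + Real.sqrt (formR G xp xp) * formR G vR u := by
    intro u hx0u hy0u hxpu hqu
    set a : ℝ := Real.sqrt (formR G xp xp) with ha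
    set cc : ℝ := Real.sqrt (-formR G u u) with hcc
    have ha2 : a^2 = formR G xp xp := Real.sq_sqrt hqxp.le
    have hc2 : cc^2 = -formR G u u := Real.sq_sqrt (by linarith)
    refine ⟨cc • xp + a • u, ?_, ?_, ?_, ?_⟩
    · simp only [formR_add_left, formR_smul_left]
      rw [sym xp x0, sym u x0, hx0xp, hx0u]
      ring
    · simp only [formR_add_left, formR_smul_left]
      rw [sym xp y0, sym u y0, hy0xp, hy0u]
      ring
    · simp only [formR_add_left, formR_add_right, formR_smul_left, formR_smul_right]
      rw [sym u xp, hxpu]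
      linear_combination formR G xp xp * hc2 + formR G u u * ha2
    · simp only [formR_add_right, formR_smul_right]
  -- main case split
  rcases eq_or_ne (formR G vR xp) 0 with hvxp | hvxp
  · -- vR pairs trivially with xp : find γ with nontrivial pairing inside W
    have hγ : ∃ γ, formR G x0 γ = 0 ∧ formR G y0 γ = 0 ∧ formR G vR γ ≠ 0 := by
      by_contra hno
      push_neg at hno
      set A : ℝ := formR G vR x0 with hA
      set B : ℝ := formR G vR y0 with hB
      set u0 : Fin n → ℝ := (A / formR G x0 x0) • x0 + (B / formR G y0 y0) • y0 with hu0
      have hveq : vR = u0 := by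
        have hsub : vR - u0 = 0 := by
          apply nondeg G hdet
          intro hh
          have h1 : formR G x0 (hh - (formR G x0 hh / formR G x0 x0) • x0
              - (formR G y0 hh / formR G y0 y0) • y0) = 0 := by
            simp only [formR_sub_right, formR_smul_right]
            rw [hxy]
            field_simp
            ring
          have h2 : formR G y0 (hh - (formR G x0 hh / formR G x0 x0) • x0
              - (formR G y0 hh / formR G y0 y0) • y0) = 0 := by
            simp only [formR_sub_right, formR_smul_right]
            rw [sym y0 x0, hxy]
            field_simp
            ring
          have hv0 := hno _ h1 h2
          simp only [formR_sub_right, formR_smul_right] at hv0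
          rw [formR_sub_left, hu0, formR_add_left, formR_smul_left, formR_smul_left]
          linear_combination hv0
        have := sub_eq_zero.mp hsub
        exact this
      have hqvR : A^2 / formR G x0 x0 + B^2 / formR G y0 y0 = 0 := by
        have h0 := hvq
        nth_rewrite 2 [hveq] at h0
        rw [hu0] at h0
        simp only [formR_add_right, formR_smul_right] at h0
        linear_combination h0
      have hA0 : A = 0 := by
        have h1 : 0 ≤ A^2 / formR G x0 x0 := div_nonneg (sq_nonneg _) hQ.le
        have h2 : 0 ≤ B^2 / formR G y0 y0 := div_nonneg (sq_nonneg _) hQy.le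
        have h3 : A^2 / formR G x0 x0 = 0 := by linarith
        have h4 : A^2 = 0 := by
          rcases div_eq_zero_iff.mp h3 with h | h
          · exact h
          · exact absurd h (ne_of_gt hQ)
        exact pow_eq_zero_iff (by norm_num) |>.mp h4
      have hB0 : B = 0 := by
        have h1 : 0 ≤ A^2 / formR G x0 x0 := div_nonneg (sq_nonneg _) hQ.le
        have h2 : 0 ≤ B^2 / formR G y0 y0 := div_nonneg (sq_nonneg _) hQy.le
        have h3 : B^2 / formR G y0 y0 = 0 := by linarith
        have h4 : B^2 = 0 := by
          rcases div_eq_zero_iff.mp h3 with h | h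
          · exact h
          · exact absurd h (ne_of_gt hQy)
        exact pow_eq_zero_iff (by norm_num) |>.mp h4
      apply hvne
      rw [hveq, hu0, hA0, hB0]
      simp
    obtain ⟨γ, hγ1, hγ2, hγ3⟩ := hγ
    set u : Fin n → ℝ := γ - (formR G xp γ / formR G xp xp) • xp with hu
    have hx0u : formR G x0 u = 0 := by
      rw [hu]
      simp only [formR_sub_right, formR_smul_right]
      rw [hγ1, hx0xp]
      ring
    have hy0u : formR G y0 u = 0 := by
      rw [hu]
      simp only [formR_sub_right, formR_smul_right]
      rw [hγ2, hy0xp]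
      ring
    have hxpu : formR G xp u = 0 := by
      rw [hu]
      simp only [formR_sub_right, formR_smul_right]
      field_simp
      ring
    have hvRu : formR G vR u = formR G vR γ := by
      rw [hu]
      simp only [formR_sub_right, formR_smul_right]
      rw [hvxp]
      ring
    have hune : u ≠ 0 := by
      intro h0
      rw [h0, formR_zero_right] at hvRu
      exact hγ3 hvRu.symm
    have hqu : formR G u u < 0 := hneg u hx0u hy0u hxpu hune
    obtain ⟨β, hb1, hb2, hb3, hb4⟩ := build u hx0u hy0u hxpu hqu
    refine ⟨β, hb1, hb2, hb3, ?_⟩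
    rw [hb4, hvxp, hvRu]
    have hapos : 0 < Real.sqrt (formR G xp xp) := Real.sqrt_pos.mpr hqxp
    intro h0
    rw [mul_zero, zero_add] at h0
    exact hγ3 ((mul_eq_zero.mp h0).resolve_left (ne_of_gt hapos))
  · -- vR pairs nontrivially with xp
    have hK : 0 < Module.finrank ℝ (W ⊓ LinearMap.ker (BR G xp) : Submodule ℝ _) := by
      have h0 := hinf W (LinearMap.ker (BR G xp))
      have h1 := hker xp
      omega
    obtain ⟨us, husne⟩ := Module.finrank_pos_iff_exists_ne_zero.mp hK
    set u : Fin n → ℝ := (us : Fin n → ℝ) with hudef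
    obtain ⟨huW, huk⟩ := Submodule.mem_inf.mp us.2
    obtain ⟨hx0u, hy0u⟩ := (hWmem u).mp huW
    have hxpu : formR G xp u = 0 := by
      have := LinearMap.mem_ker.mp huk
      rwa [← formR_eq] at this
    have hune : u ≠ 0 := fun h0 => husne (Subtype.ext h0)
    have hqu : formR G u u < 0 := hneg u hx0u hy0u hxpu hune
    have hcpos : 0 < Real.sqrt (-formR G u u) := Real.sqrt_pos.mpr (by linarith)
    rcases eq_or_ne (Real.sqrt (-formR G u u) * formR G vR xp
        + Real.sqrt (formR G xp xp) * formR G vR u) 0 with hz | hz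
    · have h1 : formR G x0 (-u) = 0 := by rw [formR_neg_right, hx0u, neg_zero]
      have h2 : formR G y0 (-u) = 0 := by rw [formR_neg_right, hy0u, neg_zero]
      have h3 : formR G xp (-u) = 0 := by rw [formR_neg_right, hxpu, neg_zero]
      have h4 : formR G (-u) (-u) < 0 := by
        rw [formR_neg_left, formR_neg_right, neg_neg]
        exact hqu
      obtain ⟨β, hb1, hb2, hb3, hb4⟩ := build (-u) h1 h2 h3 h4
      refine ⟨β, hb1, hb2, hb3, ?_⟩
      rw [formR_neg_left, formR_neg_right, neg_neg, formR_neg_right] at hb4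
      have hb4' : formR G vR β = 2 * (Real.sqrt (-formR G u u) * formR G vR xp) := by
        rw [hb4]
        linarith [hz]
      rw [hb4']
      exact mul_ne_zero two_ne_zero (mul_ne_zero (ne_of_gt hcpos) hvxp)
    · obtain ⟨β, hb1, hb2, hb3, hb4⟩ := build u hx0u hy0u hxpu hqu
      refine ⟨β, hb1, hb2, hb3, ?_⟩
      rw [hb4]
      exact hz

end NLDense

namespace NLDense

open Filter Topology Complex

variable {n : ℕ} (G : Matrix (Fin n) (Fin n) ℤ)

lemma approx_dir (hn : 4 ≤ n) (hsymm : G.IsSymm)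
    (hdet : ((G.map ((↑) : ℤ → ℝ))).det ≠ 0)
    (heven : ∀ x : Fin n → ℤ, 2 ∣ formZ G x x)
    (hhyp : ∀ v : Fin n → ℤ, IsPrimitive v → formZ G v v = 0 →
      ∃ v' : Fin n → ℤ, formZ G v' v' = 0 ∧ formZ G v v' = 1)
    {β : Fin n → ℝ} (hβ : β ≠ 0) (hqβ : formR G β β = 0)
    {v : Fin n → ℤ} (hv : formZ G v v = 0) (hsβ : formR G (cZR v) β ≠ 0)
    (m : ℤ) {ε : ℝ} (hε : 0 < ε) :
    ∃ (α : Fin n → ℤ) (lam : ℝ), IsPrimitive α ∧ formZ G α α = 2 * m ∧ lam ≠ 0 ∧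
      ‖lam⁻¹ • cZR α - β‖ < ε := by
  obtain ⟨e, μ, hprim, hiso, hμ, hdist⟩ := approx_beta G hsymm hv hβ hqβ hsβ (half_pos hε)
  obtain ⟨e', he'2, hee'⟩ := hhyp e hprim hiso
  have hμpos : 0 < |μ| := abs_pos.mpr hμ
  obtain ⟨α, lam0, hα1, hα2, hl0, hd2⟩ := approx_e G hn hsymm hdet heven hiso he'2 hee' m
    (ε := |μ| * (ε / 2)) (by positivity)
  refine ⟨α, lam0 * μ, hα1, hα2, mul_ne_zero hl0 hμ, ?_⟩
  have hsplit : (lam0 * μ)⁻¹ • cZR α - β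
      = μ⁻¹ • (lam0⁻¹ • cZR α - cZR e) + (μ⁻¹ • cZR e - β) := by
    match_scalars
    · field_simp
    · ring
    · ring
  rw [hsplit]
  have h1 : ‖μ⁻¹ • (lam0⁻¹ • cZR α - cZR e)‖ < ε / 2 := by
    rw [norm_smul, norm_inv, Real.norm_eq_abs]
    have := (inv_pos.mpr hμpos)
    calc |μ|⁻¹ * ‖lam0⁻¹ • cZR α - cZR e‖ < |μ|⁻¹ * (|μ| * (ε/2)) := by
          apply mul_lt_mul_of_pos_left hd2 this
      _ = ε / 2 := by field_simp
  calc ‖μ⁻¹ • (lam0⁻¹ • cZR α - cZR e) + (μ⁻¹ • cZR e - β)‖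
      ≤ ‖μ⁻¹ • (lam0⁻¹ • cZR α - cZR e)‖ + ‖μ⁻¹ • cZR e - β‖ := norm_add_le _ _
    _ < ε / 2 + ε / 2 := by
        apply add_lt_add h1
        rw [← dist_eq_norm]
        exact hdist
    _ = ε := by ring

lemma reim_eq_zero {a b : ℝ} : ((a : ℂ) + (b : ℂ) * I = 0) ↔ (a = 0 ∧ b = 0) := by
  constructor
  · intro h
    have hre := congrArg Complex.re h
    have him := congrArg Complex.im h
    simp at hre him
    exact ⟨hre, him⟩
  · rintro ⟨rfl, rfl⟩
    simp

lemma main_approx (hn : 4 ≤ n) (hsymm : G.IsSymm)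
    (heven : ∀ x : Fin n → ℤ, 2 ∣ formZ G x x)
    (hU : ∃ v v' : Fin n → ℤ, formZ G v v = 0 ∧ formZ G v' v' = 0 ∧ formZ G v v' = 1)
    (hhyp : ∀ v : Fin n → ℤ, IsPrimitive v → formZ G v v = 0 →
      ∃ v' : Fin n → ℤ, formZ G v' v' = 0 ∧ formZ G v v' = 1)
    (hdet : ((G.map ((↑) : ℤ → ℝ))).det ≠ 0)
    (hsig : ∃ F : Submodule ℝ (Fin n → ℝ), Module.finrank ℝ F = 3 ∧
      ∀ x ∈ F, x ≠ 0 → 0 < formR G x x)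
    (hmax : ∀ F : Submodule ℝ (Fin n → ℝ),
      (∀ x ∈ F, x ≠ 0 → 0 < formR G x x) → Module.finrank ℝ F ≤ 3)
    (m : ℤ) (z₀ : Fin n → ℂ) (hz₀ : z₀ ≠ 0) (h0 : formC G z₀ z₀ = 0)
    (hp0 : 0 < (formC G (z₀ + star z₀) (z₀ + star z₀)).re) {ε : ℝ} (hε : 0 < ε) :
    ∃ z : Fin n → ℂ, z ≠ 0 ∧ dist z z₀ < ε ∧ formC G z z = 0 ∧
      0 < (formC G (z + star z) (z + star z)).re ∧
      ∃ α : Fin n → ℤ, IsPrimitive α ∧ formZ G α α = 2 * m ∧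
        formC G z (fun i => (α i : ℂ)) = 0 := by
  classical
  have sym : ∀ a b, formR G a b = formR G b a := formR_comm G hsymm
  set x0 : Fin n → ℝ := fun i => (z₀ i).re with hx0
  set y0 : Fin n → ℝ := fun i => (z₀ i).im with hy0
  have hz0eq : z₀ = zC x0 y0 := zC_self z₀
  -- decode the quadratic conditions
  rw [hz0eq, formC_zC] at h0
  rw [reim_eq_zero] at h0
  obtain ⟨hqq, hbb⟩ := h0
  have hq01 : formR G x0 x0 = formR G y0 y0 := by linarith [hqq]
  have hxy : formR G x0 y0 = 0 := by
    have := sym y0 x0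
    linarith [hbb]
  have hQ : 0 < formR G x0 x0 := by
    rw [hz0eq, star_zC, zC_add] at hp0
    have hyy : y0 + -y0 = 0 := by abel
    rw [hyy, formC_zC] at hp0
    simp only [formR_zero_left, formR_zero_right, formR_add_left, formR_add_right] at hp0
    simp at hp0
    linarith [hp0]
  have hx0ne : x0 ≠ 0 := by
    intro hh
    rw [hh, formR_zero_left] at hQ
    exact lt_irrefl _ hQ
  -- the isotropic direction β
  obtain ⟨v, v', hv, hv', hvv'⟩ := hU
  have hvne : v ≠ 0 := by
    intro hh
    rw [hh] at hvv'
    simp [formZ, zero_dotProduct] at hvv'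
  have hvRq : formR G (cZR v) (cZR v) = 0 := by rw [formR_cast, hv]; norm_num
  have hvRne : cZR v ≠ 0 := cZR_ne_zero hvne
  obtain ⟨β, hβ1, hβ2, hβq, hβv⟩ :=
    exists_beta G hn hsymm hdet hsig hmax hQ hq01 hxy hvRq hvRne
  have hβne : β ≠ 0 := by
    intro hh
    rw [hh, formR_zero_right] at hβv
    exact hβv rfl
  -- normalized dual vector γ
  obtain ⟨γ0, hγ0⟩ := exists_pair_ne G hdet hβne
  have hg0 : formR G γ0 β ≠ 0 := by rw [sym]; exact hγ0
  set γ : Fin n → ℝ := (formR G γ0 β)⁻¹ • γ0 with hγdef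
  have hγβ : formR G γ β = 1 := by
    rw [hγdef, formR_smul_left, inv_mul_cancel₀ hg0]
  -- choose approximating sequence
  have Hk : ∀ k : ℕ, ∃ (α : Fin n → ℤ) (lam : ℝ), IsPrimitive α ∧ formZ G α α = 2 * m ∧
      lam ≠ 0 ∧ ‖lam⁻¹ • cZR α - β‖ < 1 / ((k : ℝ) + 1) := by
    intro k
    exact approx_dir G hn hsymm hdet heven hhyp hβne hβq hv hβv m (by positivity)
  choose α lam hprim hsq hlam hdist using Hk
  set δ : ℕ → (Fin n → ℝ) := fun k => (lam k)⁻¹ • cZR (α k) - β with hδ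
  have hδ0 : Tendsto δ atTop (𝓝 0) := by
    apply squeeze_zero_norm (fun k => (hdist k).le) tendsto_one_div_add_atTop_nhds_zero_nat
  have hαcast : ∀ k, cZR (α k) = lam k • (β + δ k) := by
    intro k
    have h1 : β + δ k = (lam k)⁻¹ • cZR (α k) := by
      show β + ((lam k)⁻¹ • cZR (α k) - β) = (lam k)⁻¹ • cZR (α k)
      abel
    rw [h1, smul_smul, mul_inv_cancel₀ (hlam k), one_smul]
  have tβδ : Tendsto (fun k => β + δ k) atTop (𝓝 β) := by
    have := tendsto_const_nhds (x := β) (f := atTop (α := ℕ)) |>.add hδ0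
    simpa using this
  set D : ℕ → ℝ := fun k => formR G γ (β + δ k) with hD
  have hDt : Tendsto D atTop (𝓝 1) := by
    have := tendsto_formR G (tendsto_const_nhds (x := γ)) tβδ
    rwa [hγβ] at this
  set Nx : ℕ → ℝ := fun k => formR G x0 (β + δ k) with hNx
  set Ny : ℕ → ℝ := fun k => formR G y0 (β + δ k) with hNy
  have hx0β : formR G x0 β = 0 := by rw [sym]; exact hβ1
  have hy0β : formR G y0 β = 0 := by rw [sym]; exact hβ2
  have hNxt : Tendsto Nx atTop (𝓝 0) := by
    have := tendsto_formR G (tendsto_const_nhds (x := x0)) tβδ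
    rwa [hx0β] at this
  have hNyt : Tendsto Ny atTop (𝓝 0) := by
    have := tendsto_formR G (tendsto_const_nhds (x := y0)) tβδ
    rwa [hy0β] at this
  set cx : ℕ → ℝ := fun k => Nx k / D k with hcx
  set cy : ℕ → ℝ := fun k => Ny k / D k with hcy
  have hcxt : Tendsto cx atTop (𝓝 0) := by
    have := hNxt.div hDt one_ne_zero
    rw [zero_div] at this
    exact this
  have hcyt : Tendsto cy atTop (𝓝 0) := by
    have := hNyt.div hDt one_ne_zero
    rw [zero_div] at this
    exact this
  set x1 : ℕ → (Fin n → ℝ) := fun k => x0 - cx k • γ with hx1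
  set y1 : ℕ → (Fin n → ℝ) := fun k => y0 - cy k • γ with hy1
  have hx1t : Tendsto x1 atTop (𝓝 x0) := by
    have := (tendsto_const_nhds (x := x0) (f := atTop (α := ℕ))).sub
      (hcxt.smul_const γ)
    simpa using this
  have hy1t : Tendsto y1 atTop (𝓝 y0) := by
    have := (tendsto_const_nhds (x := y0) (f := atTop (α := ℕ))).sub
      (hcyt.smul_const γ)
    simpa using this
  set A : ℕ → ℝ := fun k => formR G (x1 k) (x1 k) with hA
  set B : ℕ → ℝ := fun k => formR G (y1 k) (y1 k) with hB
  set C : ℕ → ℝ := fun k => formR G (x1 k) (y1 k) with hC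
  have hAt : Tendsto A atTop (𝓝 (formR G x0 x0)) := tendsto_formR G hx1t hx1t
  have hBt : Tendsto B atTop (𝓝 (formR G x0 x0)) := by
    have := tendsto_formR G hy1t hy1t
    rwa [← hq01] at this
  have hCt : Tendsto C atTop (𝓝 0) := by
    have := tendsto_formR G hx1t hy1t
    rwa [hxy] at this
  set E : ℕ → ℝ := fun k => B k - (C k)^2 / A k with hE
  have hEt : Tendsto E atTop (𝓝 (formR G x0 x0)) := by
    have h2 := (hCt.pow 2).div hAt (ne_of_gt hQ)
    have := hBt.sub h2
    simpa using this
  set T : ℕ → ℝ := fun k => Real.sqrt (A k / E k) with hT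
  have hTt : Tendsto T atTop (𝓝 1) := by
    have h1 : Tendsto (fun k => A k / E k) atTop (𝓝 1) := by
      have := hAt.div hEt (ne_of_gt hQ)
      rwa [div_self (ne_of_gt hQ)] at this
    have := (Real.continuous_sqrt.tendsto 1).comp h1
    rwa [Real.sqrt_one] at this
  set y2 : ℕ → (Fin n → ℝ) := fun k => T k • (y1 k - (C k / A k) • x1 k) with hy2
  have hy2t : Tendsto y2 atTop (𝓝 y0) := by
    have h1 : Tendsto (fun k => C k / A k) atTop (𝓝 0) := by
      have := hCt.div hAt (ne_of_gt hQ)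
      rw [zero_div] at this
      exact this
    have h2 : Tendsto (fun k => y1 k - (C k / A k) • x1 k) atTop (𝓝 y0) := by
      have := hy1t.sub (h1.smul hx1t)
      simpa using this
    have := hTt.smul h2
    simpa using this
  set z : ℕ → (Fin n → ℂ) := fun k => zC (x1 k) (y2 k) with hz
  have hzt : Tendsto z atTop (𝓝 z₀) := by
    rw [hz0eq, tendsto_pi_nhds]
    intro i
    have hxi : Tendsto (fun k => x1 k i) atTop (𝓝 (x0 i)) := by
      have := tendsto_pi_nhds.mp hx1t i
      exact this
    have hyi : Tendsto (fun k => y2 k i) atTop (𝓝 (y0 i)) := by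
      exact tendsto_pi_nhds.mp hy2t i
    have h1 : Tendsto (fun k => ((x1 k i : ℂ))) atTop (𝓝 ((x0 i : ℂ))) :=
      (Complex.continuous_ofReal.tendsto _).comp hxi
    have h2 : Tendsto (fun k => ((y2 k i : ℂ))) atTop (𝓝 ((y0 i : ℂ))) :=
      (Complex.continuous_ofReal.tendsto _).comp hyi
    have := h1.add (h2.mul_const I)
    exact this
  -- eventual properties
  have ev1 : ∀ᶠ k in atTop, D k ≠ 0 := hDt.eventually_ne one_ne_zero
  have ev2 : ∀ᶠ k in atTop, 0 < A k := hAt.eventually (eventually_gt_nhds hQ)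
  have ev3 : ∀ᶠ k in atTop, 0 < E k := hEt.eventually (eventually_gt_nhds hQ)
  have ev4 : ∀ᶠ k in atTop, dist (z k) z₀ < ε := (Metric.tendsto_nhds.mp hzt) ε hε
  have ev5 : ∀ᶠ k in atTop, x1 k ≠ 0 := hx1t.eventually_ne hx0ne
  obtain ⟨k, ⟨⟨hDne, hApos⟩, ⟨hEpos, hdz⟩⟩, hx1ne⟩ :=
    (((ev1.and ev2).and (ev3.and ev4)).and ev5).exists
  -- orthogonality
  have horthx : formR G (x1 k) (β + δ k) = 0 := by
    rw [hx1]
    simp only [formR_sub_left, formR_smul_left]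
    show Nx k - cx k * D k = 0
    simp only [hcx]
    field_simp
    ring
  have horthy : formR G (y1 k) (β + δ k) = 0 := by
    rw [hy1]
    simp only [formR_sub_left, formR_smul_left]
    show Ny k - cy k * D k = 0
    simp only [hcy]
    field_simp
    ring
  have horthXα : formR G (x1 k) (cZR (α k)) = 0 := by
    rw [hαcast k, formR_smul_right, horthx, mul_zero]
  have horthY1α : formR G (y1 k) (cZR (α k)) = 0 := by
    rw [hαcast k, formR_smul_right, horthy, mul_zero]
  have horthY2α : formR G (y2 k) (cZR (α k)) = 0 := by
    rw [hy2]
    simp only [formR_smul_left, formR_sub_left]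
    rw [horthY1α, horthXα]
    ring
  -- quadratic identities
  have hT2 : (T k)^2 = A k / E k := Real.sq_sqrt (div_nonneg hApos.le hEpos.le)
  have eA : formR G (x1 k) (x1 k) = A k := rfl
  have eB : formR G (y1 k) (y1 k) = B k := rfl
  have eC : formR G (x1 k) (y1 k) = C k := rfl
  have hAne : A k ≠ 0 := ne_of_gt hApos
  have hEne : E k ≠ 0 := ne_of_gt hEpos
  have hqy2 : formR G (y2 k) (y2 k) = A k := by
    rw [hy2]
    simp only [formR_smul_left, formR_smul_right, formR_sub_left, formR_sub_right]
    rw [sym (y1 k) (x1 k), eA, eB, eC]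
    have h1 : T k * (T k * (B k - C k / A k * C k) -
        C k / A k * (T k * (C k - C k / A k * A k))) = (T k)^2 * (B k - (C k)^2 / A k) := by
      field_simp
      ring
    rw [h1, hT2]
    rw [show B k - (C k)^2 / A k = E k from rfl]
    field_simp
  have hbxy2 : formR G (x1 k) (y2 k) = 0 := by
    rw [hy2]
    simp only [formR_smul_right, formR_sub_right]
    rw [eA, eC]
    field_simp
    ring
  refine ⟨z k, ?_, hdz, ?_, ?_, α k, hprim k, hsq k, ?_⟩
  · rw [hz]
    exact zC_ne_zero (y2 k) hx1ne
  · rw [hz, formC_zC, sym (y2 k) (x1 k), hbxy2, hqy2, eA]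
    simp
  · rw [hz, star_zC, zC_add]
    have hyy : y2 k + -(y2 k) = 0 := by abel
    rw [hyy, formC_zC]
    simp only [formR_zero_left, formR_zero_right, formR_add_left, formR_add_right]
    simp
    linarith [hApos]
  · have hαeq : (fun i => ((α k i : ℤ) : ℂ)) = zC (cZR (α k)) 0 := by
      funext i
      simp [zC, cZR]
    rw [hz, hαeq, formC_zC, horthXα, horthY2α, formR_zero_right, formR_zero_right]
    simp

end NLDense

open NLDense in
/-- Let `Γ` be an even lattice of signature `(3, b−3)`, `b ≥ 4`, containing a hyperbolic
plane, and such that every primitive isotropic element lies in a hyperbolic-plane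
sublattice.  For every `m ∈ ℤ`, the set of periods `[x] ∈ Q` orthogonal to some primitive
`α ∈ Γ` with `α² = 2m` is dense in the period domain `Q`. -/
theorem stmt9 (n : ℕ) (hn : 4 ≤ n) (G : Matrix (Fin n) (Fin n) ℤ)
    (hsymm : G.IsSymm)
    (heven : ∀ x : Fin n → ℤ, 2 ∣ formZ G x x)
    (hU : ∃ v v' : Fin n → ℤ, formZ G v v = 0 ∧ formZ G v' v' = 0 ∧ formZ G v v' = 1)
    (hhyp : ∀ v : Fin n → ℤ, IsPrimitive v → formZ G v v = 0 →
      ∃ v' : Fin n → ℤ, formZ G v' v' = 0 ∧ formZ G v v' = 1)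
    (hdet : ((G.map ((↑) : ℤ → ℝ))).det ≠ 0)
    (hsig : ∃ F : Submodule ℝ (Fin n → ℝ), Module.finrank ℝ F = 3 ∧
      ∀ x ∈ F, x ≠ 0 → 0 < formR G x x)
    (hmax : ∀ F : Submodule ℝ (Fin n → ℝ),
      (∀ x ∈ F, x ≠ 0 → 0 < formR G x x) → Module.finrank ℝ F ≤ 3)
    (m : ℤ) :
    Dense {p : periodDomain G |
      ∃ α : Fin n → ℤ, IsPrimitive α ∧ formZ G α α = 2 * m ∧
        ∃ (z : Fin n → ℂ) (hz : z ≠ 0), (p : ℙ ℂ (Fin n → ℂ)) = Projectivization.mk ℂ z hz ∧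
          formC G z (fun i => (α i : ℂ)) = 0} := by
  rw [dense_iff_inter_open]
  intro U hUopen hUne
  obtain ⟨p, hpU⟩ := hUne
  obtain ⟨V, hV, hVeq⟩ := isOpen_induced_iff.mp hUopen
  have hpV : (p : ℙ ℂ (Fin n → ℂ)) ∈ V := by
    rw [← hVeq] at hpU
    exact hpU
  obtain ⟨z₀, hz₀, hpeq, hC0, hCpos⟩ := p.2
  have hcont : Continuous (fun w : {w : Fin n → ℂ // w ≠ 0} =>
      (Quotient.mk'' w : ℙ ℂ (Fin n → ℂ))) := continuous_quotient_mk'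
  have hopen2 : IsOpen {w : {w : Fin n → ℂ // w ≠ 0} |
      (Quotient.mk'' w : ℙ ℂ (Fin n → ℂ)) ∈ V} := hV.preimage hcont
  obtain ⟨Wo, hWo, hWoeq⟩ := isOpen_induced_iff.mp hopen2
  have hz₀mem : z₀ ∈ Wo := by
    have h1 : (⟨z₀, hz₀⟩ : {w : Fin n → ℂ // w ≠ 0}) ∈ {w : {w : Fin n → ℂ // w ≠ 0} |
        (Quotient.mk'' w : ℙ ℂ (Fin n → ℂ)) ∈ V} := by
      show (Quotient.mk'' ⟨z₀, hz₀⟩ : ℙ ℂ (Fin n → ℂ)) ∈ V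
      have h2 : (Quotient.mk'' ⟨z₀, hz₀⟩ : ℙ ℂ (Fin n → ℂ))
          = Projectivization.mk ℂ z₀ hz₀ := rfl
      rw [h2, ← hpeq]
      exact hpV
    rw [← hWoeq] at h1
    exact h1
  obtain ⟨ε, hε, hball⟩ := Metric.isOpen_iff.mp hWo z₀ hz₀mem
  obtain ⟨z, hzne, hdistz, hzC0, hzCpos, α, hprim, hsq, hCα⟩ :=
    main_approx G hn hsymm heven hU hhyp hdet hsig hmax m z₀ hz₀ hC0 hCpos hε
  have hzmemW : z ∈ Wo := hball (by rwa [Metric.mem_ball])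
  have hmkV : (Projectivization.mk ℂ z hzne : ℙ ℂ (Fin n → ℂ)) ∈ V := by
    have h1 : (⟨z, hzne⟩ : {w : Fin n → ℂ // w ≠ 0}) ∈ Subtype.val ⁻¹' Wo := hzmemW
    rw [hWoeq] at h1
    exact h1
  have hzPD : Projectivization.mk ℂ z hzne ∈ periodDomain G :=
    ⟨z, hzne, rfl, hzC0, hzCpos⟩
  refine ⟨⟨Projectivization.mk ℂ z hzne, hzPD⟩, ?_, ?_⟩
  · rw [← hVeq]
    exact hmkV
  · exact ⟨α, hprim, hsq, z, hzne, rfl, hCα⟩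
end

section
/- Let Γ be an even unimodular lattice of signature (3,19) (e.g. the K3 lattice 2(−E₈) ⊕ 3U). Call a point [x] of the period domain Q of Γ_ℝ an exceptional Kummer point if the plane W_x = span_ℝ(Re x, Im x) ⊂ Γ_ℝ is spanned by two vectors lying in the image of Γ ⊗ ℚ in Γ_ℝ, and every γ ∈ Γ whose image in Γ_ℝ lies in W_x satisfies γ² ≡ 0 (mod 4). Then the set of exceptional Kummer points is dense in Q. -/
open Matrix
open scoped LinearAlgebra.Projectivization

/-- `W_x = span_ℝ(Re x, Im x) ⊂ Γ_ℝ` for `x ∈ (Γ_ℝ)_ℂ`. -/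
noncomputable def planeOf {n : ℕ} (z : Fin n → ℂ) : Submodule ℝ (Fin n → ℝ) :=
  Submodule.span ℝ {(fun i => (z i).re), (fun i => (z i).im)}

/-- `[x] ∈ Q` is an exceptional Kummer point: `W_x` is spanned by two vectors in the image
of `Γ ⊗ ℚ`, and every `γ ∈ Γ` whose image lies in `W_x` satisfies `γ² ≡ 0 (mod 4)`. -/
def IsExceptionalKummer {n : ℕ} (G : Matrix (Fin n) (Fin n) ℤ)
    (p : ℙ ℂ (Fin n → ℂ)) : Prop :=
  ∃ (z : Fin n → ℂ) (hz : z ≠ 0), p = Projectivization.mk ℂ z hz ∧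
    (∃ a c : Fin n → ℚ,
      planeOf z = Submodule.span ℝ {(fun i => ((a i : ℝ))), (fun i => ((c i : ℝ)))}) ∧
    ∀ γ : Fin n → ℤ, (fun i => (γ i : ℝ)) ∈ planeOf z → (4 : ℤ) ∣ formZ G γ γ

section bil
variable {R : Type*} [CommRing R] (M : Matrix (Fin 22) (Fin 22) R)

lemma bl_comm (hM : M.IsSymm) (x y : Fin 22 → R) :
    x ⬝ᵥ (M *ᵥ y) = y ⬝ᵥ (M *ᵥ x) := by
  simp only [dotProduct, Matrix.mulVec, dotProduct, Finset.mul_sum]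
  rw [Finset.sum_comm]
  refine Finset.sum_congr rfl fun i _ => Finset.sum_congr rfl fun j _ => ?_
  rw [hM.apply i j]
  ring

lemma bl_add_left (x x' y : Fin 22 → R) :
    (x + x') ⬝ᵥ (M *ᵥ y) = x ⬝ᵥ (M *ᵥ y) + x' ⬝ᵥ (M *ᵥ y) := add_dotProduct _ _ _

lemma bl_add_right (x y y' : Fin 22 → R) :
    x ⬝ᵥ (M *ᵥ (y + y')) = x ⬝ᵥ (M *ᵥ y) + x ⬝ᵥ (M *ᵥ y') := by
  rw [Matrix.mulVec_add, dotProduct_add]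

lemma bl_smul_left (c : R) (x y : Fin 22 → R) :
    (c • x) ⬝ᵥ (M *ᵥ y) = c * (x ⬝ᵥ (M *ᵥ y)) := smul_dotProduct _ _ _

lemma bl_smul_right (c : R) (x y : Fin 22 → R) :
    x ⬝ᵥ (M *ᵥ (c • y)) = c * (x ⬝ᵥ (M *ᵥ y)) := by
  rw [Matrix.mulVec_smul, dotProduct_smul]
  rfl

lemma bl_sub_right (x y y' : Fin 22 → R) :
    x ⬝ᵥ (M *ᵥ (y - y')) = x ⬝ᵥ (M *ᵥ y) - x ⬝ᵥ (M *ᵥ y') := by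
  rw [Matrix.mulVec_sub, dotProduct_sub]

end bil

section casts
variable {nn : ℕ} (G : Matrix (Fin 22) (Fin 22) ℤ)

lemma formR_cast (x y : Fin 22 → ℤ) :
    formR G (fun i => (x i : ℝ)) (fun i => (y i : ℝ)) = (formZ G x y : ℝ) := by
  simp only [formR, formZ, dotProduct, Matrix.mulVec, dotProduct, Matrix.map_apply]
  push_cast
  ring

lemma formC_ofReal (x y : Fin 22 → ℝ) :
    formC G (fun i => (x i : ℂ)) (fun i => (y i : ℂ)) = ((formR G x y : ℝ) : ℂ) := by
  simp only [formR, formC, dotProduct, Matrix.mulVec, dotProduct, Matrix.map_apply]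
  push_cast
  ring

lemma GmapR_symm (hsymm : G.IsSymm) : (G.map ((↑) : ℤ → ℝ)).IsSymm := by
  unfold Matrix.IsSymm
  rw [← Matrix.transpose_map, hsymm]

lemma GmapC_symm (hsymm : G.IsSymm) : (G.map ((↑) : ℤ → ℂ)).IsSymm := by
  unfold Matrix.IsSymm
  rw [← Matrix.transpose_map, hsymm]

/-- decomposition of `formC z z` in terms of real and imaginary parts. -/
lemma formC_decomp (hsymm : G.IsSymm) (z : Fin 22 → ℂ) :
    formC G z z = ((formR G (fun i => (z i).re) (fun i => (z i).re)
        - formR G (fun i => (z i).im) (fun i => (z i).im) : ℝ) : ℂ)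
      + (2 * formR G (fun i => (z i).re) (fun i => (z i).im) : ℝ) * Complex.I := by
  set x : Fin 22 → ℝ := fun i => (z i).re
  set y : Fin 22 → ℝ := fun i => (z i).im
  have hz : z = (fun i => (x i : ℂ)) + Complex.I • (fun i => (y i : ℂ)) := by
    funext i
    simp only [Pi.add_apply, Pi.smul_apply, smul_eq_mul]
    rw [mul_comm]
    exact (Complex.re_add_im (z i)).symm
  rw [show formC G z z = z ⬝ᵥ ((G.map ((↑) : ℤ → ℂ)) *ᵥ z) from rfl]
  rw [hz]
  rw [bl_add_left, bl_add_right, bl_add_right, bl_smul_left, bl_smul_left, bl_smul_right,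
    bl_smul_right]
  rw [bl_comm (G.map ((↑) : ℤ → ℂ)) (GmapC_symm G hsymm) (fun i => (y i : ℂ)) (fun i => (x i : ℂ))]
  rw [show (fun i => (x i : ℂ)) ⬝ᵥ ((G.map ((↑) : ℤ → ℂ)) *ᵥ (fun i => (x i : ℂ)))
      = formC G (fun i => (x i : ℂ)) (fun i => (x i : ℂ)) from rfl]
  rw [show (fun i => (x i : ℂ)) ⬝ᵥ ((G.map ((↑) : ℤ → ℂ)) *ᵥ (fun i => (y i : ℂ)))
      = formC G (fun i => (x i : ℂ)) (fun i => (y i : ℂ)) from rfl]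
  rw [show (fun i => (y i : ℂ)) ⬝ᵥ ((G.map ((↑) : ℤ → ℂ)) *ᵥ (fun i => (y i : ℂ)))
      = formC G (fun i => (y i : ℂ)) (fun i => (y i : ℂ)) from rfl]
  rw [formC_ofReal, formC_ofReal, formC_ofReal]
  push_cast
  ring_nf
  simp [Complex.I_sq]
  ring

end casts

section sec1
variable (G : Matrix (Fin 22) (Fin 22) ℤ)

lemma fZ_add_right (x y y' : Fin 22 → ℤ) :
    formZ G x (y + y') = formZ G x y + formZ G x y' := bl_add_right G x y y'
lemma fZ_smul_right (c : ℤ) (x y : Fin 22 → ℤ) :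
    formZ G x (c • y) = c * formZ G x y := bl_smul_right G c x y
lemma fZ_comm (hsymm : G.IsSymm) (x y : Fin 22 → ℤ) :
    formZ G x y = formZ G y x := bl_comm G hsymm x y
lemma fZ_expand (hsymm : G.IsSymm) (x y : Fin 22 → ℤ) :
    formZ G (x + y) (x + y) = formZ G x x + 2 * formZ G x y + formZ G y y := by
  unfold formZ
  rw [add_dotProduct, bl_add_right, bl_add_right, bl_comm G hsymm y x]
  ring

/-- standard basis vectors -/
def EE (i : Fin 22) : Fin 22 → ℤ := Pi.single i 1

lemma EE_same (i : Fin 22) : EE i i = 1 := Pi.single_eq_same i 1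
lemma EE_ne {i j : Fin 22} (h : j ≠ i) : EE i j = 0 := Pi.single_eq_of_ne h 1

lemma formZ_single (e : Fin 22 → ℤ) (m : Fin 22) : formZ G e (EE m) = (e ᵥ* G) m := by
  simp [formZ, EE, Matrix.mulVec_single, Matrix.vecMul, dotProduct]

lemma exists_odd_pairing (huni : IsUnit G.det) (e : Fin 22 → ℤ) (he : ∃ i, ¬ 2 ∣ e i) :
    ∃ m, ¬ 2 ∣ formZ G e (EE m) := by
  by_contra h
  push_neg at h
  obtain ⟨i, hi⟩ := he
  have h2 : ∀ m, 2 ∣ (e ᵥ* G) m := fun m => (formZ_single G e m) ▸ h m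
  set w : Fin 22 → ℤ := fun m => (e ᵥ* G) m / 2 with hw
  have hwm : ∀ m, (e ᵥ* G) m = 2 * w m := fun m => (Int.mul_ediv_cancel' (h2 m)).symm
  have key : ∀ j, ((e ᵥ* G) ᵥ* G.adjugate) j = G.det * e j := by
    rw [Matrix.vecMul_vecMul, Matrix.mul_adjugate]
    intro j
    simp [Matrix.vecMul, dotProduct, Matrix.smul_apply, Matrix.one_apply, mul_ite,
      Finset.sum_ite_eq, mul_comm]
  have keven : 2 ∣ G.det * e i := by
    rw [← key i]
    have h3 : ((e ᵥ* G) ᵥ* G.adjugate) i = ∑ t, (2 * w t) * G.adjugate t i := by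
      simp only [Matrix.vecMul, dotProduct]
      exact Finset.sum_congr rfl fun t _ => by rw [show (2:ℤ) * w t = (e ᵥ* G) t from (hwm t).symm]; rfl
    rw [h3]
    exact Finset.dvd_sum fun t _ => ⟨w t * G.adjugate t i, by ring⟩
  have hdet : G.det = 1 ∨ G.det = -1 := Int.isUnit_iff.mp huni
  rcases hdet with hd | hd <;> rw [hd] at keven <;> omega
end sec1

section sec1b
variable (G : Matrix (Fin 22) (Fin 22) ℤ)

lemma existsA (hsymm : G.IsSymm) (heven : ∀ x : Fin 22 → ℤ, 2 ∣ formZ G x x) :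
    ∃ e : Fin 22 → ℤ, (∃ i, ¬ 2 ∣ e i) ∧ 4 ∣ formZ G e e := by
  by_contra hA
  push_neg at hA
  have key : ∀ x y : Fin 22 → ℤ, (∃ i, ¬2 ∣ x i) → (∃ i, ¬2 ∣ y i) →
      (∃ i, ¬2 ∣ (x i + y i)) → ¬ 2 ∣ formZ G x y := by
    intro x y hx hy hxy hdvd
    have e1 := heven x
    have e2 := heven y
    have n1 := hA x hx
    have n2 := hA y hy
    have n3 := hA (x + y) (by obtain ⟨i, hi⟩ := hxy; exact ⟨i, by simpa using hi⟩)
    rw [fZ_expand G hsymm] at n3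
    omega
  have d01 : (0 : Fin 22) ≠ 1 := by decide
  have d02 : (0 : Fin 22) ≠ 2 := by decide
  have d12 : (1 : Fin 22) ≠ 2 := by decide
  have h01 := key (EE 0) (EE 1) ⟨0, by rw [EE_same]; decide⟩ ⟨1, by rw [EE_same]; decide⟩
    ⟨0, by rw [EE_same, EE_ne d01]; decide⟩
  have h02 := key (EE 0) (EE 2) ⟨0, by rw [EE_same]; decide⟩ ⟨2, by rw [EE_same]; decide⟩
    ⟨0, by rw [EE_same, EE_ne d02]; decide⟩
  have h012 := key (EE 0) (EE 1 + EE 2) ⟨0, by rw [EE_same]; decide⟩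
    ⟨1, by simp only [Pi.add_apply]; rw [EE_same, EE_ne d12]; decide⟩
    ⟨0, by simp only [Pi.add_apply]; rw [EE_same, EE_ne d01, EE_ne d02]; decide⟩
  rw [fZ_add_right] at h012
  omega

lemma pick3 (a b : Fin 22) : ∃ x y z : Fin 22, x ≠ y ∧ x ≠ z ∧ y ≠ z ∧
    x ≠ a ∧ x ≠ b ∧ y ≠ a ∧ y ≠ b ∧ z ≠ a ∧ z ≠ b := by
  have hcard : 2 < (Finset.univ \ {a, b} : Finset (Fin 22)).card := by
    rw [Finset.card_univ_diff]
    have h1 : ({a, b} : Finset (Fin 22)).card ≤ 2 := Finset.card_insert_le a {b}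
    have h2 : Fintype.card (Fin 22) = 22 := by simp
    omega
  obtain ⟨x, y, z, hx, hy, hz, hxy, hxz, hyz⟩ := Finset.two_lt_card_iff.mp hcard
  simp only [Finset.mem_sdiff, Finset.mem_insert, Finset.mem_singleton, not_or] at hx hy hz
  exact ⟨x, y, z, hxy, hxz, hyz, hx.2.1, hx.2.2, hy.2.1, hy.2.2, hz.2.1, hz.2.2⟩

lemma oddminor (e g : Fin 22 → ℤ) (he : ∃ i, ¬ 2 ∣ e i) (hg0 : ∃ i, ¬ 2 ∣ g i)
    (hge : ∃ i, ¬ 2 ∣ (g i - e i)) :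
    ∃ i j, ¬ 2 ∣ (e i * g j - e j * g i) := by
  obtain ⟨i, hi⟩ := he
  have hei : Odd (e i) := Int.odd_iff.mpr (by omega)
  by_cases hgi : 2 ∣ g i
  · obtain ⟨j, hj⟩ := hg0
    refine ⟨i, j, ?_⟩
    have h1 : Odd (e i * g j) := hei.mul (Int.odd_iff.mpr (by omega))
    have h2 : Even (e j * g i) := (Int.even_iff.mpr (by omega)).mul_left (e j)
    intro hdvd
    have := h1.sub_even h2
    rw [Int.odd_iff] at this
    omega
  · obtain ⟨j, hj⟩ := hge
    refine ⟨i, j, ?_⟩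
    have hred : e i * g j - e j * g i = e i * (g j - e j) - e j * (g i - e i) := by ring
    have h1 : Odd (e i * (g j - e j)) := hei.mul (Int.odd_iff.mpr (by omega))
    have h2 : Even (e j * (g i - e i)) := (Int.even_iff.mpr (by omega)).mul_left (e j)
    rw [hred]
    intro hdvd
    have := h1.sub_even h2
    rw [Int.odd_iff] at this
    omega

end sec1b

section sec1c
variable (G : Matrix (Fin 22) (Fin 22) ℤ)

lemma existsB (hsymm : G.IsSymm) (heven : ∀ x : Fin 22 → ℤ, 2 ∣ formZ G x x)
    (huni : IsUnit G.det) (e : Fin 22 → ℤ) (he : ∃ i, ¬ 2 ∣ e i) :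
    ∃ g, 4 ∣ formZ G g g ∧ 2 ∣ formZ G e g ∧ (∃ i, ¬ 2 ∣ g i) ∧
      (∃ i, ¬ 2 ∣ (g i - e i)) := by
  obtain ⟨m, hm⟩ := exists_odd_pairing G huni e he
  by_contra hB
  push_neg at hB
  have Hcon : ∀ v, 2 ∣ formZ G e v → (∃ i, ¬2 ∣ v i) → (∃ i, ¬2 ∣ (v i - e i)) →
      ¬ (4:ℤ) ∣ formZ G v v := by
    intro v h1 h2 h3 h4
    obtain ⟨i, hi⟩ := h3
    exact hi (hB v h4 h1 h2 i)
  set eps : Fin 22 → ℤ := fun j => if 2 ∣ formZ G e (EE j) then 0 else 1 with heps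
  have hce : ∀ j, 2 ∣ formZ G e (EE j + eps j • EE m) := by
    intro j
    rw [fZ_add_right, fZ_smul_right]
    by_cases h2 : 2 ∣ formZ G e (EE j)
    · have h0 : eps j = 0 := by simp [heps, h2]
      rw [h0]; omega
    · have h0 : eps j = 1 := by simp [heps, h2]
      rw [h0]; omega
  have key : ∀ v u, 2 ∣ formZ G e v → 2 ∣ formZ G e u →
      (∃ i, ¬2 ∣ v i) → (∃ i, ¬2 ∣ (v i - e i)) →
      (∃ i, ¬2 ∣ u i) → (∃ i, ¬2 ∣ (u i - e i)) →
      (∃ i, ¬2 ∣ (v i + u i)) → (∃ i, ¬2 ∣ (v i + u i - e i)) →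
      ¬ 2 ∣ formZ G v u := by
    intro v u hv hu bv cv bu cu bvu cvu hdvd
    have n1 := Hcon v hv bv cv
    have n2 := Hcon u hu bu cu
    have n3 := Hcon (v + u) (by rw [fZ_add_right]; omega)
      (by obtain ⟨i, hi⟩ := bvu; exact ⟨i, by simpa using hi⟩)
      (by obtain ⟨i, hi⟩ := cvu; exact ⟨i, by simpa using hi⟩)
    rw [fZ_expand G hsymm] at n3
    have e1 := heven v
    have e2 := heven u
    omega
  -- coordinate values of the building blocks
  have cval : ∀ j t : Fin 22, t ≠ j → t ≠ m → (EE j + eps j • EE m) t = 0 := by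
    intro j t h1 h2
    simp only [Pi.add_apply, Pi.smul_apply, smul_eq_mul, EE_ne h1, EE_ne h2, mul_zero, add_zero]
  have cval1 : ∀ j t : Fin 22, t = j → t ≠ m → (EE j + eps j • EE m) t = 1 := by
    intro j t h1 h2
    subst h1
    simp only [Pi.add_apply, Pi.smul_apply, smul_eq_mul, EE_same, EE_ne h2, mul_zero, add_zero]
  by_cases hcase : ∃ i₀, i₀ ≠ m ∧ ¬ 2 ∣ e i₀
  · obtain ⟨i₀, hi₀m, hi₀⟩ := hcase
    obtain ⟨j₁, j₂, j₃, h12, h13, h23, hj₁m, hj₁i, hj₂m, hj₂i, hj₃m, hj₃i⟩ := pick3 m i₀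
    set y := EE j₁ + eps j₁ • EE m with hy
    set w := EE j₂ + eps j₂ • EE m with hw
    set x := EE j₃ + eps j₃ • EE m with hx
    have hy1 : y j₁ = 1 := cval1 j₁ j₁ rfl hj₁m
    have hy2 : y j₂ = 0 := cval j₁ j₂ (fun h => h12 h.symm) hj₂m
    have hy3 : y j₃ = 0 := cval j₁ j₃ (fun h => h13 h.symm) hj₃m
    have hy0 : y i₀ = 0 := cval j₁ i₀ (fun h => hj₁i h.symm) hi₀m
    have hw1 : w j₁ = 0 := cval j₂ j₁ h12 hj₁m
    have hw2 : w j₂ = 1 := cval1 j₂ j₂ rfl hj₂m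
    have hw3 : w j₃ = 0 := cval j₂ j₃ (fun h => h23 h.symm) hj₃m
    have hw0 : w i₀ = 0 := cval j₂ i₀ (fun h => hj₂i h.symm) hi₀m
    have hx1 : x j₁ = 0 := cval j₃ j₁ h13 hj₁m
    have hx2 : x j₂ = 0 := cval j₃ j₂ h23 hj₂m
    have hx3 : x j₃ = 1 := cval1 j₃ j₃ rfl hj₃m
    have hx0 : x i₀ = 0 := cval j₃ i₀ (fun h => hj₃i h.symm) hi₀m
    have K2a := key x y (hce j₃) (hce j₁)
      ⟨j₃, by rw [hx3]; decide⟩ ⟨i₀, by rw [hx0]; omega⟩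
      ⟨j₁, by rw [hy1]; decide⟩ ⟨i₀, by rw [hy0]; omega⟩
      ⟨j₃, by rw [hx3, hy3]; decide⟩ ⟨i₀, by rw [hx0, hy0]; omega⟩
    have K2b := key x w (hce j₃) (hce j₂)
      ⟨j₃, by rw [hx3]; decide⟩ ⟨i₀, by rw [hx0]; omega⟩
      ⟨j₂, by rw [hw2]; decide⟩ ⟨i₀, by rw [hw0]; omega⟩
      ⟨j₃, by rw [hx3, hw3]; decide⟩ ⟨i₀, by rw [hx0, hw0]; omega⟩
    have hyw : 2 ∣ formZ G e (y + w) := by rw [fZ_add_right]; exact dvd_add (hce j₁) (hce j₂)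
    have K3 := key x (y + w) (hce j₃) hyw
      ⟨j₃, by rw [hx3]; decide⟩ ⟨i₀, by rw [hx0]; omega⟩
      ⟨j₁, by simp only [Pi.add_apply]; rw [hy1, hw1]; decide⟩
      ⟨i₀, by simp only [Pi.add_apply]; rw [hy0, hw0]; omega⟩
      ⟨j₃, by simp only [Pi.add_apply]; rw [hx3, hy3, hw3]; decide⟩
      ⟨i₀, by simp only [Pi.add_apply]; rw [hx0, hy0, hw0]; omega⟩
    rw [fZ_add_right] at K3
    omega
  · push_neg at hcase
    have hem : ¬ 2 ∣ e m := by
      obtain ⟨i, hi⟩ := he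
      by_cases him : i = m
      · rwa [him] at hi
      · exact absurd (hcase i him) hi
    obtain ⟨j₁, j₂, j₃, h12, h13, h23, hj₁m, _, hj₂m, _, hj₃m, _⟩ := pick3 m m
    set y := EE j₁ + eps j₁ • EE m with hy
    set w := EE j₂ + eps j₂ • EE m with hw
    set x := EE j₃ + eps j₃ • EE m with hx
    have hy1 : y j₁ = 1 := cval1 j₁ j₁ rfl hj₁m
    have hy2 : y j₂ = 0 := cval j₁ j₂ (fun h => h12 h.symm) hj₂m
    have hy3 : y j₃ = 0 := cval j₁ j₃ (fun h => h13 h.symm) hj₃m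
    have hw1 : w j₁ = 0 := cval j₂ j₁ h12 hj₁m
    have hw2 : w j₂ = 1 := cval1 j₂ j₂ rfl hj₂m
    have hw3 : w j₃ = 0 := cval j₂ j₃ (fun h => h23 h.symm) hj₃m
    have hx1 : x j₁ = 0 := cval j₃ j₁ h13 hj₁m
    have hx2 : x j₂ = 0 := cval j₃ j₂ h23 hj₂m
    have hx3 : x j₃ = 1 := cval1 j₃ j₃ rfl hj₃m
    have he1 := hcase j₁ hj₁m
    have he2 := hcase j₂ hj₂m
    have he3 := hcase j₃ hj₃m
    have K2a := key x y (hce j₃) (hce j₁)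
      ⟨j₃, by rw [hx3]; decide⟩ ⟨j₃, by rw [hx3]; omega⟩
      ⟨j₁, by rw [hy1]; decide⟩ ⟨j₁, by rw [hy1]; omega⟩
      ⟨j₃, by rw [hx3, hy3]; decide⟩ ⟨j₃, by rw [hx3, hy3]; omega⟩
    have K2b := key x w (hce j₃) (hce j₂)
      ⟨j₃, by rw [hx3]; decide⟩ ⟨j₃, by rw [hx3]; omega⟩
      ⟨j₂, by rw [hw2]; decide⟩ ⟨j₂, by rw [hw2]; omega⟩
      ⟨j₃, by rw [hx3, hw3]; decide⟩ ⟨j₃, by rw [hx3, hw3]; omega⟩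
    have hyw : 2 ∣ formZ G e (y + w) := by rw [fZ_add_right]; exact dvd_add (hce j₁) (hce j₂)
    have K3 := key x (y + w) (hce j₃) hyw
      ⟨j₃, by rw [hx3]; decide⟩ ⟨j₃, by rw [hx3]; omega⟩
      ⟨j₁, by simp only [Pi.add_apply]; rw [hy1, hw1]; decide⟩
      ⟨j₁, by simp only [Pi.add_apply]; rw [hy1, hw1]; omega⟩
      ⟨j₃, by simp only [Pi.add_apply]; rw [hx3, hy3, hw3]; decide⟩
      ⟨j₃, by simp only [Pi.add_apply]; rw [hx3, hy3, hw3]; omega⟩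
    rw [fZ_add_right] at K3
    omega

lemma masterTwo (hsymm : G.IsSymm) (heven : ∀ x : Fin 22 → ℤ, 2 ∣ formZ G x x)
    (huni : IsUnit G.det) :
    ∃ g₁ g₂ : Fin 22 → ℤ, 4 ∣ formZ G g₁ g₁ ∧ 4 ∣ formZ G g₂ g₂ ∧ 2 ∣ formZ G g₁ g₂ ∧
      ∃ i j, ¬ 2 ∣ (g₁ i * g₂ j - g₁ j * g₂ i) := by
  obtain ⟨e, he, hee⟩ := existsA G hsymm heven
  obtain ⟨g, hgg, heg, hg0, hge⟩ := existsB G hsymm heven huni e he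
  exact ⟨e, g, hee, hgg, heg, oddminor e g he hg0 hge⟩

end sec1c

section sec3
variable (G : Matrix (Fin 22) (Fin 22) ℤ)

lemma fZ_smul_left (c : ℤ) (x y : Fin 22 → ℤ) :
    formZ G (c • x) y = c * formZ G x y := smul_dotProduct c x _

lemma mod4_span (hsymm : G.IsSymm) (u v : Fin 22 → ℤ)
    (huu : 4 ∣ formZ G u u) (hvv : 4 ∣ formZ G v v) (huv : 2 ∣ formZ G u v)
    (i j : Fin 22) (hodd : ¬ 2 ∣ (u i * v j - u j * v i))
    (γ : Fin 22 → ℤ)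
    (hmem : (fun t => (γ t : ℝ)) ∈
      Submodule.span ℝ {(fun t => (u t : ℝ)), (fun t => (v t : ℝ))}) :
    (4:ℤ) ∣ formZ G γ γ := by
  obtain ⟨α, β, hab⟩ := Submodule.mem_span_pair.mp hmem
  have hct : ∀ t, α * (u t : ℝ) + β * (v t : ℝ) = (γ t : ℝ) := by
    intro t
    have := congrFun hab t
    simpa using this
  set m : ℤ := u i * v j - u j * v i with hmdef
  set A : ℤ := γ i * v j - γ j * v i with hAdef
  set Bc : ℤ := u i * γ j - u j * γ i with hBdef
  have hAr : (A : ℝ) = α * (m : ℝ) := by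
    push_cast [hAdef, hmdef]
    rw [← hct i, ← hct j]
    ring
  have hBr : (Bc : ℝ) = β * (m : ℝ) := by
    push_cast [hBdef, hmdef]
    rw [← hct i, ← hct j]
    ring
  have hvec : m • γ = A • u + Bc • v := by
    funext t
    have hr : (m : ℝ) * (γ t : ℝ) = (A : ℝ) * (u t : ℝ) + (Bc : ℝ) * (v t : ℝ) := by
      rw [hAr, hBr, ← hct t]
      ring
    have : ((m * γ t : ℤ) : ℝ) = ((A * u t + Bc * v t : ℤ) : ℝ) := by push_cast; exact hr
    have hz : m * γ t = A * u t + Bc * v t := by exact_mod_cast this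
    simpa using hz
  have hexp : m ^ 2 * formZ G γ γ =
      A ^ 2 * formZ G u u + 2 * (A * Bc) * formZ G u v + Bc ^ 2 * formZ G v v := by
    have h1 : formZ G (m • γ) (m • γ) = m ^ 2 * formZ G γ γ := by
      rw [fZ_smul_left, fZ_smul_right]; ring
    have h2 : formZ G (A • u + Bc • v) (A • u + Bc • v) =
        A ^ 2 * formZ G u u + 2 * (A * Bc) * formZ G u v + Bc ^ 2 * formZ G v v := by
      rw [fZ_expand G hsymm, fZ_smul_left, fZ_smul_right, fZ_smul_left, fZ_smul_right,
        fZ_smul_left, fZ_smul_right]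
      ring
    rw [← h1, hvec, h2]
  have h4 : (4:ℤ) ∣ m ^ 2 * formZ G γ γ := by
    rw [hexp]
    obtain ⟨p, hp⟩ := huu
    obtain ⟨q, hq⟩ := hvv
    obtain ⟨r, hr⟩ := huv
    exact ⟨A ^ 2 * p + A * Bc * r + Bc ^ 2 * q, by rw [hp, hq, hr]; ring⟩
  obtain ⟨k, hk⟩ : ∃ k, m = 2 * k + 1 := ⟨m / 2, by omega⟩
  have hsq : m ^ 2 * formZ G γ γ = 4 * ((k * k + k) * formZ G γ γ) + formZ G γ γ := by
    rw [hk]; ring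
  omega

end sec3

section sec4a
variable (G : Matrix (Fin 22) (Fin 22) ℤ)

lemma fZ_add_left (x x' y : Fin 22 → ℤ) :
    formZ G (x + x') y = formZ G x y + formZ G x' y := add_dotProduct _ _ _

lemma fR_add_right (x y y' : Fin 22 → ℝ) :
    formR G x (y + y') = formR G x y + formR G x y' := bl_add_right _ x y y'
lemma fR_sub_right (x y y' : Fin 22 → ℝ) :
    formR G x (y - y') = formR G x y - formR G x y' := bl_sub_right _ x y y'
lemma fR_smul_left (c : ℝ) (x y : Fin 22 → ℝ) :
    formR G (c • x) y = c * formR G x y := smul_dotProduct _ _ _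
lemma fR_smul_right (c : ℝ) (x y : Fin 22 → ℝ) :
    formR G x (c • y) = c * formR G x y := bl_smul_right _ c x y
lemma fR_comm (hsymm : G.IsSymm) (x y : Fin 22 → ℝ) :
    formR G x y = formR G y x := bl_comm _ (GmapR_symm G hsymm) x y

lemma fZ_shift_self (hsymm : G.IsSymm) (g w : Fin 22 → ℤ) (h : 4 ∣ formZ G g g) :
    4 ∣ formZ G (g + (2:ℤ) • w) (g + (2:ℤ) • w) := by
  rw [fZ_expand G hsymm, fZ_smul_right, fZ_smul_left, fZ_smul_right]
  obtain ⟨p, hp⟩ := h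
  exact ⟨p + formZ G g w + formZ G w w, by rw [hp]; ring⟩

lemma fZ_shift_cross (g g' w w' : Fin 22 → ℤ) (h : 2 ∣ formZ G g g') :
    2 ∣ formZ G (g + (2:ℤ) • w) (g' + (2:ℤ) • w') := by
  rw [fZ_add_left, fZ_add_right, fZ_add_right, fZ_smul_left, fZ_smul_left, fZ_smul_right,
    fZ_smul_right]
  obtain ⟨p, hp⟩ := h
  exact ⟨p + formZ G g w' + (formZ G w g' + 2 * formZ G w w'), by rw [hp]; ring⟩

lemma minor_shift (g g' w w' : Fin 22 → ℤ) (i j : Fin 22)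
    (h : ¬ 2 ∣ (g i * g' j - g j * g' i)) :
    ¬ 2 ∣ ((g i + 2 * w i) * (g' j + 2 * w' j) - (g j + 2 * w j) * (g' i + 2 * w' i)) := by
  intro hd
  apply h
  have hE : (g i + 2 * w i) * (g' j + 2 * w' j) - (g j + 2 * w j) * (g' i + 2 * w' i)
      = (g i * g' j - g j * g' i) + 2 * (g i * w' j + w i * g' j + 2 * w i * w' j
        - g j * w' i - w j * g' i - 2 * w j * w' i) := by ring
  omega

lemma formR_continuous : Continuous (fun q : (Fin 22 → ℝ) × (Fin 22 → ℝ) => formR G q.1 q.2) := by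
  unfold formR Matrix.mulVec
  simp only [dotProduct]
  refine continuous_finset_sum _ fun i _ => Continuous.mul ?_ (continuous_finset_sum _ fun j _ => ?_)
  · exact (continuous_apply i).comp continuous_fst
  · exact continuous_const.mul ((continuous_apply j).comp continuous_snd)

lemma span_pair_transform (r d : ℝ) (hr : r ≠ 0) (U V : Fin 22 → ℝ) :
    Submodule.span ℝ {r • U, V - d • U} = Submodule.span ℝ {U, V} := by
  apply le_antisymm
  · rw [Submodule.span_le]
    rintro q (rfl | rfl)
    · exact Submodule.smul_mem _ r (Submodule.subset_span (by simp))
    · exact sub_mem (Submodule.subset_span (by simp))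
        (Submodule.smul_mem _ d (Submodule.subset_span (by simp)))
  · have hU : U ∈ Submodule.span ℝ {r • U, V - d • U} := by
      have := Submodule.smul_mem (Submodule.span ℝ {r • U, V - d • U}) r⁻¹
        (Submodule.subset_span (show r • U ∈ _ by simp))
      rwa [smul_smul, inv_mul_cancel₀ hr, one_smul] at this
    have hV : V ∈ Submodule.span ℝ {r • U, V - d • U} := by
      have h1 : V - d • U ∈ Submodule.span ℝ {r • U, V - d • U} :=
        Submodule.subset_span (by simp)
      have := add_mem h1 (Submodule.smul_mem _ d hU)
      simpa using this
    rw [Submodule.span_le]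
    intro q hq
    simp only [Set.mem_insert_iff, Set.mem_singleton_iff] at hq
    rcases hq with h | h <;> subst h
    · exact hU
    · exact hV
  
lemma span_pair_smul (c c' : ℝ) (hc : c ≠ 0) (hc' : c' ≠ 0) (U V : Fin 22 → ℝ) :
    Submodule.span ℝ {c • U, c' • V} = Submodule.span ℝ {U, V} := by
  apply le_antisymm
  · rw [Submodule.span_le]
    rintro q (rfl | rfl)
    · exact Submodule.smul_mem _ c (Submodule.subset_span (by simp))
    · exact Submodule.smul_mem _ c' (Submodule.subset_span (by simp))
  · have hU : U ∈ Submodule.span ℝ {c • U, c' • V} := by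
      have := Submodule.smul_mem (Submodule.span ℝ {c • U, c' • V}) c⁻¹
        (Submodule.subset_span (show c • U ∈ _ by simp))
      rwa [smul_smul, inv_mul_cancel₀ hc, one_smul] at this
    have hV : V ∈ Submodule.span ℝ {c • U, c' • V} := by
      have := Submodule.smul_mem (Submodule.span ℝ {c • U, c' • V}) c'⁻¹
        (Submodule.subset_span (show c' • V ∈ _ by simp))
      rwa [smul_smul, inv_mul_cancel₀ hc', one_smul] at this
    rw [Submodule.span_le]
    intro q hq
    simp only [Set.mem_insert_iff, Set.mem_singleton_iff] at hq
    rcases hq with h | h <;> subst h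
    · exact hU
    · exact hV

end sec4a

section sec4b
open Filter

lemma approx_tendsto (a : Fin 22 → ℝ) (g : Fin 22 → ℤ) :
    Filter.Tendsto (fun (k : ℕ) => fun (t : Fin 22) =>
      ((g t + 2 * round (((k:ℝ) * a t - g t)/2) : ℤ) : ℝ) / k) Filter.atTop (nhds a) := by
  rw [tendsto_pi_nhds]
  intro t
  rw [← tendsto_sub_nhds_zero_iff]
  apply squeeze_zero_norm' (a := fun k : ℕ => 1 / (k:ℝ))
  · filter_upwards [Filter.eventually_ge_atTop 1] with k hk
    have hkpos : (0:ℝ) < k := by positivity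
    set s : ℝ := ((k:ℝ) * a t - g t)/2 with hs
    have hrb : |s - (round s : ℤ)| ≤ 1/2 := abs_sub_round s
    have hnum : ((g t + 2 * round s : ℤ) : ℝ) - (k:ℝ) * a t = -2 * (s - (round s : ℤ)) := by
      push_cast
      rw [hs]
      ring
    have habs : |((g t + 2 * round s : ℤ) : ℝ) - (k:ℝ) * a t| ≤ 1 := by
      rw [hnum, abs_mul]
      have h2 : |(-2:ℝ)| = 2 := by norm_num
      rw [h2]
      linarith
    have hdiv : ((g t + 2 * round s : ℤ) : ℝ) / k - a t
        = (((g t + 2 * round s : ℤ) : ℝ) - (k:ℝ) * a t) / k := by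
      field_simp
    rw [Real.norm_eq_abs, hdiv, abs_div, abs_of_pos hkpos]
    exact (div_le_div_iff_of_pos_right hkpos).mpr habs
  · exact tendsto_one_div_atTop_nhds_zero_nat
end sec4b
open Filter in
lemma seq_build (G : Matrix (Fin 22) (Fin 22) ℤ) (hsymm : G.IsSymm) (g₁ g₂ : Fin 22 → ℤ)
    (h4g₁ : 4 ∣ formZ G g₁ g₁) (h4g₂ : 4 ∣ formZ G g₂ g₂) (h2g : 2 ∣ formZ G g₁ g₂)
    (i j : Fin 22) (hmg : ¬ 2 ∣ (g₁ i * g₂ j - g₁ j * g₂ i)) (a b : Fin 22 → ℝ) :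
    ∃ (u v : ℕ → Fin 22 → ℤ) (U V : ℕ → Fin 22 → ℝ),
      Tendsto U atTop (nhds a) ∧ Tendsto V atTop (nhds b) ∧
      (∀ k : ℕ, 1 ≤ k → ∃ c : ℝ, c ≠ 0 ∧ U k = c • (fun t => ((u k t : ℝ)))
        ∧ V k = c • (fun t => ((v k t : ℝ)))) ∧
      (∀ k, 4 ∣ formZ G (u k) (u k)) ∧ (∀ k, 4 ∣ formZ G (v k) (v k)) ∧
      (∀ k, 2 ∣ formZ G (u k) (v k)) ∧
      (∀ k, ¬ 2 ∣ (u k i * v k j - u k j * v k i)) := by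
  refine ⟨fun k => g₁ + (2:ℤ) • (fun t => round (((k:ℝ) * a t - g₁ t)/2)),
    fun k => g₂ + (2:ℤ) • (fun t => round (((k:ℝ) * b t - g₂ t)/2)),
    fun k t => ((g₁ t + 2 * round (((k:ℝ) * a t - g₁ t)/2) : ℤ) : ℝ) / k,
    fun k t => ((g₂ t + 2 * round (((k:ℝ) * b t - g₂ t)/2) : ℤ) : ℝ) / k,
    approx_tendsto a g₁, approx_tendsto b g₂, ?_, ?_, ?_, ?_, ?_⟩
  · intro k hk
    have hkne : (k:ℝ) ≠ 0 := by
      have : (0:ℝ) < k := by exact_mod_cast hk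
      exact ne_of_gt this
    refine ⟨(k:ℝ)⁻¹, inv_ne_zero hkne, ?_, ?_⟩
    · funext t
      simp [div_eq_inv_mul]
    · funext t
      simp [div_eq_inv_mul]
  · intro k
    exact fZ_shift_self G hsymm g₁ _ h4g₁
  · intro k
    exact fZ_shift_self G hsymm g₂ _ h4g₂
  · intro k
    exact fZ_shift_cross G g₁ g₂ _ _ h2g
  · intro k
    have := minor_shift g₁ g₂ (fun t => round (((k:ℝ) * a t - g₁ t)/2))
      (fun t => round (((k:ℝ) * b t - g₂ t)/2)) i j hmg
    simpa [Pi.add_apply, Pi.smul_apply, smul_eq_mul] using this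
open Filter in
set_option maxHeartbeats 1000000 in
/-- Let `Γ` be an even unimodular lattice of signature `(3,19)` (e.g. the K3 lattice).
The set of exceptional Kummer points is dense in the period domain `Q`. -/
theorem stmt12 (G : Matrix (Fin 22) (Fin 22) ℤ)
    (hsymm : G.IsSymm)
    (heven : ∀ x : Fin 22 → ℤ, 2 ∣ formZ G x x)
    (huni : IsUnit G.det)
    (hsig : ∃ F : Submodule ℝ (Fin 22 → ℝ), Module.finrank ℝ F = 3 ∧
      ∀ x ∈ F, x ≠ 0 → 0 < formR G x x)
    (hmax : ∀ F : Submodule ℝ (Fin 22 → ℝ),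
      (∀ x ∈ F, x ≠ 0 → 0 < formR G x x) → Module.finrank ℝ F ≤ 3) :
    Dense {p : periodDomain G | IsExceptionalKummer G (p : ℙ ℂ (Fin 22 → ℂ))} := by
  intro P
  rw [mem_closure_iff_nhds]
  intro tset htset
  obtain ⟨tu, htu, htsub⟩ := (mem_nhds_subtype (periodDomain G) P tset).mp htset
  obtain ⟨O, hOsub, hOopen, hPO⟩ := mem_nhds_iff.mp htu
  obtain ⟨z₀, hz₀, hPmk, hform, hpos⟩ := P.2
  set a : Fin 22 → ℝ := fun i => (z₀ i).re with ha
  set b : Fin 22 → ℝ := fun i => (z₀ i).im with hb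
  have h0 := formC_decomp G hsymm z₀
  rw [hform] at h0
  have hre : formR G a a = formR G b b := by
    have h1 := congrArg Complex.re h0.symm
    simp at h1
    linarith
  have him : formR G a b = 0 := by
    have h1 := congrArg Complex.im h0.symm
    simp at h1
    linarith
  have hposa : 0 < formR G a a := by
    have hz2 : z₀ + star z₀ = fun i => ((2 * a i : ℝ) : ℂ) := by
      funext i
      simp only [Pi.add_apply, Pi.star_apply]
      rw [show (star (z₀ i) : ℂ) = (starRingEnd ℂ) (z₀ i) from rfl, Complex.add_conj]
    rw [hz2, formC_ofReal] at hpos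
    have h2a : (fun i => 2 * a i) = (2:ℝ) • a := by funext i; simp
    rw [h2a, fR_smul_left, fR_smul_right, Complex.ofReal_re] at hpos
    linarith
  have hposb : 0 < formR G b b := hre ▸ hposa
  obtain ⟨g₁, g₂, h4g₁, h4g₂, h2g, i, j, hmg⟩ := masterTwo G hsymm heven huni
  obtain ⟨u, v, U, V, hUa, hVb, hscale, h4u, h4v, h2uv, hodd⟩ :=
    seq_build G hsymm g₁ g₂ h4g₁ h4g₂ h2g i j hmg a b
  -- limits of the form values
  have hBUU : Tendsto (fun k => formR G (U k) (U k)) atTop (nhds (formR G a a)) :=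
    ((formR_continuous G).tendsto (a, a)).comp (hUa.prodMk_nhds hUa)
  have hBUV : Tendsto (fun k => formR G (U k) (V k)) atTop (nhds (formR G a b)) :=
    ((formR_continuous G).tendsto (a, b)).comp (hUa.prodMk_nhds hVb)
  set d : ℕ → ℝ := fun k => formR G (U k) (V k) / formR G (U k) (U k) with hd
  have hdz : Tendsto d atTop (nhds 0) := by
    have h1 := Filter.Tendsto.div hBUV hBUU (ne_of_gt hposa)
    rw [him, zero_div] at h1
    exact h1
  set y : ℕ → Fin 22 → ℝ := fun k => V k - d k • U k with hy
  have hyb : Tendsto y atTop (nhds b) := by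
    have h1 := hVb.sub (hdz.smul hUa)
    simpa using h1
  have hByy : Tendsto (fun k => formR G (y k) (y k)) atTop (nhds (formR G b b)) :=
    ((formR_continuous G).tendsto (b, b)).comp (hyb.prodMk_nhds hyb)
  set r : ℕ → ℝ := fun k => Real.sqrt (formR G (y k) (y k) / formR G (U k) (U k)) with hr
  have hr1 : Tendsto r atTop (nhds 1) := by
    have h1 := Filter.Tendsto.div hByy hBUU (ne_of_gt hposa)
    rw [← hre, div_self (ne_of_gt hposa)] at h1
    have h2 := (Real.continuous_sqrt.tendsto 1).comp h1
    rw [Real.sqrt_one] at h2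
    exact h2
  set x : ℕ → Fin 22 → ℝ := fun k => r k • U k with hx
  have hxa : Tendsto x atTop (nhds a) := by
    have h1 := hr1.smul hUa
    simpa using h1
  set z : ℕ → Fin 22 → ℂ := fun k t => (x k t : ℂ) + (y k t : ℂ) * Complex.I with hz
  have hzt : Tendsto z atTop (nhds z₀) := by
    rw [tendsto_pi_nhds]
    intro tt
    have hxc : Tendsto (fun k => x k tt) atTop (nhds (a tt)) := tendsto_pi_nhds.mp hxa tt
    have hyc : Tendsto (fun k => y k tt) atTop (nhds (b tt)) := tendsto_pi_nhds.mp hyb tt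
    have h1 := (Complex.continuous_ofReal.tendsto (a tt)).comp hxc
    have h2 := ((Complex.continuous_ofReal.tendsto (b tt)).comp hyc).mul_const Complex.I
    have h3 := h1.add h2
    have h4 : (a tt : ℂ) + (b tt : ℂ) * Complex.I = z₀ tt := Complex.re_add_im (z₀ tt)
    rw [h4] at h3
    exact h3
  -- the open set upstairs
  have hopen : IsOpen {ww : Fin 22 → ℂ | ww ≠ 0} := isOpen_ne
  set qm : {ww : Fin 22 → ℂ // ww ≠ 0} → ℙ ℂ (Fin 22 → ℂ) := fun ww => Quotient.mk'' ww with hqm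
  have hqmcont : Continuous qm := continuous_quotient_mk'
  set OS : Set (Fin 22 → ℂ) := Subtype.val '' (qm ⁻¹' O) with hOS
  have hOSopen : IsOpen OS := (hopen.isOpenMap_subtype_val) _ (hqmcont.isOpen_preimage O hOopen)
  have hz₀OS : z₀ ∈ OS := by
    refine ⟨⟨z₀, hz₀⟩, ?_, rfl⟩
    show Quotient.mk'' ⟨z₀, hz₀⟩ ∈ O
    rw [show (Quotient.mk'' ⟨z₀, hz₀⟩ : ℙ ℂ (Fin 22 → ℂ)) = Projectivization.mk ℂ z₀ hz₀ from rfl,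
      ← hPmk]
    exact hPO
  -- pick a good index
  have EV0 : ∀ᶠ (k : ℕ) in atTop, 1 ≤ k := Filter.eventually_ge_atTop 1
  have EV1 : ∀ᶠ k in atTop, 0 < formR G (U k) (U k) := hBUU.eventually (eventually_gt_nhds hposa)
  have EV2 : ∀ᶠ k in atTop, 0 < formR G (y k) (y k) := hByy.eventually (eventually_gt_nhds hposb)
  have EV3 : ∀ᶠ k in atTop, z k ∈ OS := hzt (hOSopen.mem_nhds hz₀OS)
  obtain ⟨k, hk⟩ := (EV0.and (EV1.and (EV2.and EV3))).exists
  obtain ⟨hk0, hkU, hky, hkO⟩ : 1 ≤ k ∧ 0 < formR G (U k) (U k) ∧ 0 < formR G (y k) (y k)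
      ∧ z k ∈ OS := ⟨hk.1, hk.2.1, hk.2.2.1, hk.2.2.2⟩
  obtain ⟨c, hcne, hUc, hVc⟩ := hscale k hk0
  have hzne : z k ≠ 0 := by
    obtain ⟨ws, _, hval⟩ := hkO
    exact hval ▸ ws.2
  -- algebraic identities at index k
  have hBUy : formR G (U k) (y k) = 0 := by
    rw [show y k = V k - d k • U k from rfl, fR_sub_right, fR_smul_right,
      show d k = formR G (U k) (V k) / formR G (U k) (U k) from rfl,
      div_mul_cancel₀ _ (ne_of_gt hkU), sub_self]
  have hryy : r k * r k = formR G (y k) (y k) / formR G (U k) (U k) :=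
    Real.mul_self_sqrt (le_of_lt (div_pos hky hkU))
  have hBxx : formR G (x k) (x k) = formR G (y k) (y k) := by
    rw [show x k = r k • U k from rfl, fR_smul_left, fR_smul_right, ← mul_assoc, hryy,
      div_mul_cancel₀ _ (ne_of_gt hkU)]
  have hBxy : formR G (x k) (y k) = 0 := by
    rw [show x k = r k • U k from rfl, fR_smul_left, hBUy, mul_zero]
  have hrpos : 0 < r k := Real.sqrt_pos.mpr (div_pos hky hkU)
  have hxpos : 0 < formR G (x k) (x k) := hky.trans_eq hBxx.symm
  have hzre : (fun tt => ((z k tt).re)) = x k := by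
    funext tt
    simp [hz]
  have hzim : (fun tt => ((z k tt).im)) = y k := by
    funext tt
    simp [hz]
  have hformz : formC G (z k) (z k) = 0 := by
    rw [formC_decomp G hsymm (z k), hzre, hzim, hBxx, hBxy]
    simp
  have hposz : 0 < (formC G (z k + star (z k)) (z k + star (z k))).re := by
    have hz2 : z k + star (z k) = fun tt => ((2 * x k tt : ℝ) : ℂ) := by
      funext tt
      simp only [Pi.add_apply, Pi.star_apply]
      have hco : (z k tt).re = x k tt := congrFun hzre tt
      rw [show (star (z k tt) : ℂ) = (starRingEnd ℂ) (z k tt) from rfl, Complex.add_conj, hco]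
    rw [hz2, formC_ofReal]
    have h2x : (fun tt => 2 * x k tt) = (2:ℝ) • (x k) := by funext tt; simp
    rw [h2x, fR_smul_left, fR_smul_right, Complex.ofReal_re]
    linarith
  have hmemQ : Projectivization.mk ℂ (z k) hzne ∈ periodDomain G :=
    ⟨z k, hzne, rfl, hformz, hposz⟩
  have hqO : Projectivization.mk ℂ (z k) hzne ∈ O := by
    obtain ⟨ws, hwsO, hval⟩ := hkO
    have hws : ws = ⟨z k, hzne⟩ := Subtype.ext hval
    rw [hws] at hwsO
    exact hwsO
  have hplane : planeOf (z k) = Submodule.span ℝ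
      {(fun tt => ((u k tt : ℝ))), (fun tt => ((v k tt : ℝ)))} := by
    unfold planeOf
    rw [hzre, hzim]
    have h1 : Submodule.span ℝ {x k, y k} = Submodule.span ℝ {U k, V k} := by
      rw [show x k = r k • U k from rfl, show y k = V k - d k • U k from rfl]
      exact span_pair_transform (r k) (d k) (ne_of_gt hrpos) (U k) (V k)
    rw [h1, hUc, hVc]
    exact span_pair_smul c c hcne hcne _ _
  refine ⟨⟨Projectivization.mk ℂ (z k) hzne, hmemQ⟩, htsub (hOsub hqO), ?_⟩
  refine ⟨z k, hzne, rfl, ⟨fun tt => ((u k tt : ℚ)), fun tt => ((v k tt : ℚ)), ?_⟩, ?_⟩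
  · rw [hplane]
    have e1 : (fun tt => (((u k tt : ℚ) : ℝ))) = (fun tt => ((u k tt : ℝ))) := by
      funext tt
      push_cast
      rfl
    have e2 : (fun tt => (((v k tt : ℚ) : ℝ))) = (fun tt => ((v k tt : ℝ))) := by
      funext tt
      push_cast
      rfl
    rw [e1, e2]
  · intro γ hγ
    rw [hplane] at hγ
    exact mod4_span G hsymm (u k) (v k) (h4u k) (h4v k) (h2uv k) i j (hodd k) γ hγ
end

section
/- Let Γ be a lattice of signature (3, b−3) with b ≥ 4. Call a point [x] of the period domain Q of Γ_ℝ exceptional if the plane W_x = span_ℝ(Re x, Im x) ⊂ Γ_ℝ is spanned by two vectors lying in the image of Γ ⊗ ℚ in Γ_ℝ. Then the set of exceptional points is dense in Q. -/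
open Matrix
open scoped LinearAlgebra.Projectivization

/-- `[x] ∈ Q` is exceptional: `W_x = span_ℝ(Re x, Im x)` is spanned by two vectors lying
in the image of `Γ ⊗ ℚ` in `Γ_ℝ`. -/
def IsExceptional {n : ℕ} (p : ℙ ℂ (Fin n → ℂ)) : Prop :=
  ∃ (z : Fin n → ℂ) (hz : z ≠ 0), p = Projectivization.mk ℂ z hz ∧
    ∃ a c : Fin n → ℚ,
      Submodule.span ℝ {(fun i => (z i).re), (fun i => (z i).im)} =
        Submodule.span ℝ {(fun i => ((a i : ℝ))), (fun i => ((c i : ℝ)))}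

/-- coordinatewise complexification -/
def cf {n : ℕ} (u : Fin n → ℝ) : Fin n → ℂ := fun i => (u i : ℂ)

lemma formC_sum {n : ℕ} (G : Matrix (Fin n) (Fin n) ℤ) (x y : Fin n → ℂ) :
    formC G x y = ∑ i, ∑ j, x i * (G i j : ℂ) * y j := by
  simp [formC, dotProduct, Matrix.mulVec, Matrix.map_apply, Finset.mul_sum, mul_assoc]

lemma formR_sum {n : ℕ} (G : Matrix (Fin n) (Fin n) ℤ) (x y : Fin n → ℝ) :
    formR G x y = ∑ i, ∑ j, x i * (G i j : ℝ) * y j := by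
  simp [formR, dotProduct, Matrix.mulVec, Matrix.map_apply, Finset.mul_sum, mul_assoc]

lemma formC_cf {n : ℕ} (G : Matrix (Fin n) (Fin n) ℤ) (u w : Fin n → ℝ) :
    formC G (cf u) (cf w) = ((formR G u w : ℝ) : ℂ) := by
  simp only [formC_sum, formR_sum, cf]
  push_cast
  rfl

lemma formC_symm {n : ℕ} {G : Matrix (Fin n) (Fin n) ℤ} (h : G.IsSymm) (x y : Fin n → ℂ) :
    formC G x y = formC G y x := by
  rw [formC_sum, formC_sum, Finset.sum_comm]
  refine Finset.sum_congr rfl fun i _ => Finset.sum_congr rfl fun j _ => ?_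
  rw [← h.apply i j]
  ring

lemma formR_symm {n : ℕ} {G : Matrix (Fin n) (Fin n) ℤ} (h : G.IsSymm) (x y : Fin n → ℝ) :
    formR G x y = formR G y x := by
  rw [formR_sum, formR_sum, Finset.sum_comm]
  refine Finset.sum_congr rfl fun i _ => Finset.sum_congr rfl fun j _ => ?_
  rw [← h.apply i j]
  ring

lemma formC_expand {n : ℕ} (G : Matrix (Fin n) (Fin n) ℤ) (x y : Fin n → ℂ) (t : ℂ) :
    formC G (x + t • y) (x + t • y)
      = formC G x x + t * formC G x y + t * formC G y x + t ^ 2 * formC G y y := by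
  simp only [formC_sum, Finset.mul_sum, ← Finset.sum_add_distrib]
  refine Finset.sum_congr rfl fun i _ => Finset.sum_congr rfl fun j _ => ?_
  simp only [Pi.add_apply, Pi.smul_apply, smul_eq_mul]
  ring

lemma formR_expand {n : ℕ} (G : Matrix (Fin n) (Fin n) ℤ) (x y : Fin n → ℝ) (t : ℝ) :
    formR G (x + t • y) (x + t • y)
      = formR G x x + t * formR G x y + t * formR G y x + t ^ 2 * formR G y y := by
  simp only [formR_sum, Finset.mul_sum, ← Finset.sum_add_distrib]
  refine Finset.sum_congr rfl fun i _ => Finset.sum_congr rfl fun j _ => ?_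
  simp only [Pi.add_apply, Pi.smul_apply, smul_eq_mul]
  ring

lemma formR_two_smul {n : ℕ} (G : Matrix (Fin n) (Fin n) ℤ) (x : Fin n → ℝ) :
    formR G (fun i => 2 * x i) (fun i => 2 * x i) = 4 * formR G x x := by
  simp only [formR_sum, Finset.mul_sum]
  refine Finset.sum_congr rfl fun i _ => Finset.sum_congr rfl fun j _ => ?_
  ring

lemma formR_zero {n : ℕ} (G : Matrix (Fin n) (Fin n) ℤ) :
    formR G (0 : Fin n → ℝ) 0 = 0 := by
  simp [formR_sum]

lemma continuous_formR {n : ℕ} (G : Matrix (Fin n) (Fin n) ℤ) :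
    Continuous (fun p : (Fin n → ℝ) × (Fin n → ℝ) => formR G p.1 p.2) := by
  simp only [formR_sum]
  refine continuous_finset_sum _ fun i _ => continuous_finset_sum _ fun j _ => ?_
  exact (((continuous_apply i).comp continuous_fst).mul continuous_const).mul
    ((continuous_apply j).comp continuous_snd)

lemma continuous_cf {n : ℕ} : Continuous (cf (n := n)) :=
  continuous_pi fun i => Complex.continuous_ofReal.comp (continuous_apply i)

lemma continuous_projMk {K V : Type*} [DivisionRing K] [AddCommGroup V]
    [Module K V] [TopologicalSpace V] :
    Continuous (Projectivization.mk' K : {v : V // v ≠ 0} → ℙ K V) :=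
  continuous_quotient_mk'

lemma exists_open_of_isOpen_proj {K V : Type*} [DivisionRing K] [AddCommGroup V]
    [Module K V] [TopologicalSpace V] [T1Space V] {S : Set (ℙ K V)} (hS : IsOpen S) :
    ∃ O : Set V, IsOpen O ∧ ∀ z : V, ∀ hz : z ≠ 0,
      (Projectivization.mk K z hz ∈ S ↔ z ∈ O) := by
  have h1 : IsOpen ((Projectivization.mk' K : {v : V // v ≠ 0} → ℙ K V) ⁻¹' S) :=
    hS.preimage continuous_projMk
  rw [isOpen_induced_iff] at h1
  obtain ⟨O', hO', hpre⟩ := h1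
  refine ⟨O' ∩ {z | z ≠ 0}, hO'.inter (isOpen_compl_singleton), fun z hz => ?_⟩
  constructor
  · intro h
    have : (⟨z, hz⟩ : {v : V // v ≠ 0}) ∈ Subtype.val ⁻¹' O' := by
      rw [hpre]; exact h
    exact ⟨this, hz⟩
  · intro ⟨h1, _⟩
    have : (⟨z, hz⟩ : {v : V // v ≠ 0}) ∈ Subtype.val ⁻¹' O' := h1
    rw [hpre] at this; exact this

lemma quad_root (qa qc E s : ℝ) (hqc : qc ≠ 0) (hs : s^2 = qa*qc - E^2) :
    (qa:ℂ) + 2*((((-E/qc : ℝ)):ℂ) + (((s/qc:ℝ)):ℂ)*Complex.I)*(E:ℂ)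
      + ((((-E/qc:ℝ)):ℂ) + (((s/qc:ℝ)):ℂ)*Complex.I)^2*(qc:ℂ) = 0 := by
  have hs' : (s:ℂ)^2 = (qa:ℂ)*(qc:ℂ) - (E:ℂ)^2 := by exact_mod_cast congrArg (Complex.ofReal) hs
  have hqc' : (qc:ℂ) ≠ 0 := by exact_mod_cast hqc
  have hI : Complex.I^2 = -1 := Complex.I_sq
  push_cast
  field_simp
  ring_nf
  linear_combination ((s:ℂ)^2) * hI + (-1 : ℂ) * hs'

/-- the square root of the quadratic equation parametrization. -/
noncomputable def tau {n : ℕ} (G : Matrix (Fin n) (Fin n) ℤ)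
    (p : (Fin n → ℝ) × (Fin n → ℝ)) : ℂ :=
  ((-(formR G p.1 p.2)/(formR G p.2 p.2) : ℝ) : ℂ)
    + ((Real.sqrt (formR G p.1 p.1 * formR G p.2 p.2 - (formR G p.1 p.2)^2)
        / formR G p.2 p.2 : ℝ) : ℂ) * Complex.I

/-- the map sending a pair of real vectors to a complex period point. -/
noncomputable def Fmap {n : ℕ} (G : Matrix (Fin n) (Fin n) ℤ)
    (p : (Fin n → ℝ) × (Fin n → ℝ)) : Fin n → ℂ :=
  cf p.1 + tau G p • cf p.2

lemma tau_re {n : ℕ} (G : Matrix (Fin n) (Fin n) ℤ) (p : (Fin n → ℝ) × (Fin n → ℝ)) :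
    (tau G p).re = -(formR G p.1 p.2)/(formR G p.2 p.2) := by
  simp [tau]

lemma tau_im {n : ℕ} (G : Matrix (Fin n) (Fin n) ℤ) (p : (Fin n → ℝ) × (Fin n → ℝ)) :
    (tau G p).im = Real.sqrt (formR G p.1 p.1 * formR G p.2 p.2 - (formR G p.1 p.2)^2)
        / formR G p.2 p.2 := by
  simp [tau]

lemma Fmap_re {n : ℕ} (G : Matrix (Fin n) (Fin n) ℤ) (p : (Fin n → ℝ) × (Fin n → ℝ)) :
    (fun i => ((Fmap G p) i).re) = p.1 + (tau G p).re • p.2 := by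
  funext i
  simp [Fmap, cf, Complex.add_re, Complex.mul_re]

lemma Fmap_im {n : ℕ} (G : Matrix (Fin n) (Fin n) ℤ) (p : (Fin n → ℝ) × (Fin n → ℝ)) :
    (fun i => ((Fmap G p) i).im) = (tau G p).im • p.2 := by
  funext i
  simp [Fmap, cf, Complex.add_im, Complex.mul_im]

lemma continuousAt_Fmap {n : ℕ} (G : Matrix (Fin n) (Fin n) ℤ)
    {p : (Fin n → ℝ) × (Fin n → ℝ)} (h : formR G p.2 p.2 ≠ 0) :
    ContinuousAt (Fmap G) p := by
  have hq1 : Continuous (fun q : (Fin n → ℝ) × (Fin n → ℝ) => formR G q.1 q.1) :=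
    (continuous_formR G).comp (continuous_fst.prodMk continuous_fst)
  have hq2 : Continuous (fun q : (Fin n → ℝ) × (Fin n → ℝ) => formR G q.2 q.2) :=
    (continuous_formR G).comp (continuous_snd.prodMk continuous_snd)
  have he : Continuous (fun q : (Fin n → ℝ) × (Fin n → ℝ) => formR G q.1 q.2) :=
    continuous_formR G
  have htau : ContinuousAt (tau G) p := by
    apply ContinuousAt.add
    · exact Complex.continuous_ofReal.continuousAt.comp
        ((he.neg.continuousAt).div hq2.continuousAt h)
    · exact (Complex.continuous_ofReal.continuousAt.comp
        (((Real.continuous_sqrt.comp ((hq1.mul hq2).sub (he.pow 2))).continuousAt).div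
          hq2.continuousAt h)).mul continuousAt_const
  exact ((continuous_cf.comp continuous_fst).continuousAt).add
    (htau.smul ((continuous_cf.comp continuous_snd).continuousAt))

lemma span_pair_shear {n : ℕ} (a c : Fin n → ℝ) (r si : ℝ) (hsi : si ≠ 0) :
    Submodule.span ℝ {a + r • c, si • c} = Submodule.span ℝ {a, c} := by
  apply le_antisymm <;> rw [Submodule.span_le] <;> intro w hw <;>
    simp only [Set.mem_insert_iff, Set.mem_singleton_iff] at hw <;>
    rcases hw with rfl | rfl
  · exact Submodule.mem_span_pair.mpr ⟨1, r, by rw [one_smul]⟩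
  · exact Submodule.mem_span_pair.mpr ⟨0, si, by rw [zero_smul, zero_add]⟩
  · refine Submodule.mem_span_pair.mpr ⟨1, -(r/si), ?_⟩
    rw [one_smul, smul_smul]
    have h1 : -(r/si)*si = -r := by field_simp
    rw [h1, neg_smul, add_assoc, add_neg_cancel, add_zero]
  · refine Submodule.mem_span_pair.mpr ⟨0, si⁻¹, ?_⟩
    rw [zero_smul, zero_add, smul_smul, inv_mul_cancel₀ hsi, one_smul]

lemma dense_ratPairs {n : ℕ} :
    Dense ((Set.range fun q : Fin n → ℚ => fun i => ((q i : ℝ))) ×ˢ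
           (Set.range fun q : Fin n → ℚ => fun i => ((q i : ℝ)))) := by
  have h1 : Dense (Set.range fun q : Fin n → ℚ => fun i => ((q i : ℝ))) := by
    have h2 : Dense (Set.pi Set.univ fun _ : Fin n => Set.range ((↑) : ℚ → ℝ)) :=
      dense_pi Set.univ fun i _ => Rat.denseRange_cast
    refine h2.mono ?_
    intro x hx
    choose q hq using fun i => hx i (Set.mem_univ i)
    exact ⟨q, funext fun i => hq i⟩
  exact h1.prod h1

/-- Let `Γ` be a lattice of signature `(3, b−3)`, `b ≥ 4`.  The set of exceptional period
points is dense in the period domain `Q`. -/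
theorem stmt13 (n : ℕ) (hn : 4 ≤ n) (G : Matrix (Fin n) (Fin n) ℤ)
    (hsymm : G.IsSymm)
    (hdet : ((G.map ((↑) : ℤ → ℝ))).det ≠ 0)
    (hsig : ∃ F : Submodule ℝ (Fin n → ℝ), Module.finrank ℝ F = 3 ∧
      ∀ x ∈ F, x ≠ 0 → 0 < formR G x x)
    (hmax : ∀ F : Submodule ℝ (Fin n → ℝ),
      (∀ x ∈ F, x ≠ 0 → 0 < formR G x x) → Module.finrank ℝ F ≤ 3) :
    Dense {p : periodDomain G | IsExceptional (p : ℙ ℂ (Fin n → ℂ))} := by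
  rw [dense_iff_inter_open]
  intro U hU hUne
  obtain ⟨V, hVopen, hVU⟩ := isOpen_induced_iff.mp hU
  obtain ⟨p0, hp0U⟩ := hUne
  obtain ⟨x, hx, hpx, hq0, hqpos⟩ := p0.2
  obtain ⟨O, hOopen, hO⟩ := exists_open_of_isOpen_proj hVopen
  have hxV : Projectivization.mk ℂ x hx ∈ V := by
    have h1 : (p0 : ℙ ℂ (Fin n → ℂ)) ∈ V := by
      rw [← hVU] at hp0U; exact hp0U
    rwa [hpx] at h1
  have hxO : x ∈ O := (hO x hx).mp hxV
  set u : Fin n → ℝ := fun i => (x i).re with hu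
  set v : Fin n → ℝ := fun i => (x i).im with hv
  have hxuv : x = cf u + Complex.I • cf v := by
    funext i
    simp only [cf, Pi.add_apply, Pi.smul_apply, smul_eq_mul, hu, hv]
    rw [mul_comm]
    exact (Complex.re_add_im (x i)).symm
  -- decompose the quadric condition
  have hexp := formC_expand G (cf u) (cf v) Complex.I
  rw [← hxuv, hq0] at hexp
  simp only [formC_cf] at hexp
  rw [formR_symm hsymm v u] at hexp
  have key : ((formR G u u - formR G v v : ℝ) : ℂ)
      + ((2 * formR G u v : ℝ) : ℂ) * Complex.I = 0 := by
    push_cast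
    push_cast at hexp
    linear_combination (-1 : ℂ) * hexp + (-(formR G v v : ℂ)) * Complex.I_sq
  have hre : formR G v v = formR G u u := by
    have h2 := congrArg Complex.re key
    simp at h2
    linarith
  have him : formR G u v = 0 := by
    have h2 := congrArg Complex.im key
    simp at h2
    linarith
  -- positivity of q(u)
  have hxs : x + star x = cf (fun i => 2 * u i) := by
    funext i
    simp only [cf, Pi.add_apply, Pi.star_apply, Complex.star_def, hu]
    rw [Complex.add_conj]
  have hqu : 0 < formR G u u := by
    rw [hxs, formC_cf, formR_two_smul, Complex.ofReal_re] at hqpos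
    linarith
  -- continuity at (u, v)
  have hq2ne : formR G ((u, v) : (Fin n → ℝ) × (Fin n → ℝ)).2 ((u, v)).2 ≠ 0 := by
    simpa [hre] using hqu.ne'
  have hFcont : ContinuousAt (Fmap G) (u, v) := continuousAt_Fmap G hq2ne
  have hFx : Fmap G (u, v) = x := by
    rw [Fmap, hxuv]
    congr 1
    have hdd : formR G u u * formR G v v - (formR G u v)^2 = formR G u u * formR G u u := by
      rw [hre, him]; ring
    have htau : tau G ((u, v) : (Fin n → ℝ) × (Fin n → ℝ)) = Complex.I := by
      rw [tau]
      show ((-(formR G u v)/(formR G v v) : ℝ) : ℂ)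
        + ((Real.sqrt (formR G u u * formR G v v - (formR G u v)^2) / formR G v v : ℝ) : ℂ)
          * Complex.I = Complex.I
      rw [him, hre]
      have h9 : formR G u u * formR G u u - (0:ℝ)^2 = formR G u u * formR G u u := by ring
      rw [h9, Real.sqrt_mul_self hqu.le, div_self hqu.ne']
      norm_num
    rw [htau]
  -- neighbourhood of (u, v) of good parameters
  have hq1c : Continuous (fun q : (Fin n → ℝ) × (Fin n → ℝ) => formR G q.1 q.1) :=
    (continuous_formR G).comp (continuous_fst.prodMk continuous_fst)
  have hq2c : Continuous (fun q : (Fin n → ℝ) × (Fin n → ℝ) => formR G q.2 q.2) :=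
    (continuous_formR G).comp (continuous_snd.prodMk continuous_snd)
  have hec : Continuous (fun q : (Fin n → ℝ) × (Fin n → ℝ) => formR G q.1 q.2) :=
    continuous_formR G
  have hN1 : Fmap G ⁻¹' O ∈ nhds ((u, v) : (Fin n → ℝ) × (Fin n → ℝ)) :=
    hFcont.preimage_mem_nhds (hOopen.mem_nhds (hFx ▸ hxO))
  have hN2 : {q : (Fin n → ℝ) × (Fin n → ℝ) | 0 < formR G q.2 q.2} ∈
      nhds ((u, v) : (Fin n → ℝ) × (Fin n → ℝ)) := by
    refine (isOpen_lt continuous_const hq2c).mem_nhds ?_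
    show 0 < formR G v v
    rw [hre]; exact hqu
  have hN3 : {q : (Fin n → ℝ) × (Fin n → ℝ) |
      0 < formR G q.1 q.1 * formR G q.2 q.2 - (formR G q.1 q.2)^2} ∈
      nhds ((u, v) : (Fin n → ℝ) × (Fin n → ℝ)) := by
    refine (isOpen_lt continuous_const ((hq1c.mul hq2c).sub (hec.pow 2))).mem_nhds ?_
    show 0 < formR G u u * formR G v v - (formR G u v)^2
    rw [hre, him]
    nlinarith
  have hN := Filter.inter_mem (Filter.inter_mem hN1 hN2) hN3
  obtain ⟨⟨a, c⟩, ⟨⟨haO, hqc⟩, hD⟩, hrat⟩ :=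
    mem_closure_iff_nhds.mp (dense_ratPairs (u, v)) _ hN
  obtain ⟨⟨A, hA⟩, ⟨Crat, hC⟩⟩ := hrat
  simp only [Set.mem_setOf_eq] at hqc hD
  -- the new period point
  set z : Fin n → ℂ := Fmap G (a, c) with hzdef
  have hqcne : formR G c c ≠ 0 := hqc.ne'
  have hsqpos : 0 < Real.sqrt (formR G a a * formR G c c - (formR G a c)^2) :=
    Real.sqrt_pos.mpr hD
  have himfun : (fun i => (z i).im) = (Real.sqrt (formR G a a * formR G c c
      - (formR G a c)^2) / formR G c c) • c := by
    rw [hzdef, Fmap_im, tau_im]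
  have hrefun : (fun i => (z i).re) = a + (-(formR G a c)/(formR G c c)) • c := by
    rw [hzdef, Fmap_re, tau_re]
  have hsi : Real.sqrt (formR G a a * formR G c c - (formR G a c)^2) / formR G c c ≠ 0 :=
    (div_pos hsqpos hqc).ne'
  have hcne : c ≠ 0 := by
    intro h
    rw [h] at hqc
    rw [formR_zero] at hqc
    exact lt_irrefl 0 hqc
  have hz : z ≠ 0 := by
    intro h
    apply hcne
    have h2 : (fun i => (z i).im) = 0 := by rw [h]; funext i; simp
    rw [himfun] at h2
    exact (smul_eq_zero.mp h2).resolve_left hsi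
  -- z is on the quadric
  have hzq : formC G z z = 0 := by
    have hs2 : (Real.sqrt (formR G a a * formR G c c - (formR G a c)^2))^2
        = formR G a a * formR G c c - (formR G a c)^2 := Real.sq_sqrt hD.le
    have hq := quad_root (formR G a a) (formR G c c) (formR G a c)
      (Real.sqrt (formR G a a * formR G c c - (formR G a c)^2)) hqcne hs2
    rw [hzdef, Fmap, formC_expand]
    simp only [formC_cf]
    rw [formR_symm hsymm c a]
    rw [tau]
    show ((formR G a a : ℝ) : ℂ)
      + (((-(formR G a c)/(formR G c c) : ℝ) : ℂ)
        + ((Real.sqrt (formR G a a * formR G c c - (formR G a c)^2) / formR G c c : ℝ) : ℂ)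
          * Complex.I) * ((formR G a c : ℝ) : ℂ)
      + (((-(formR G a c)/(formR G c c) : ℝ) : ℂ)
        + ((Real.sqrt (formR G a a * formR G c c - (formR G a c)^2) / formR G c c : ℝ) : ℂ)
          * Complex.I) * ((formR G a c : ℝ) : ℂ)
      + (((-(formR G a c)/(formR G c c) : ℝ) : ℂ)
        + ((Real.sqrt (formR G a a * formR G c c - (formR G a c)^2) / formR G c c : ℝ) : ℂ)
          * Complex.I) ^ 2 * ((formR G c c : ℝ) : ℂ) = 0
    linear_combination hq
  -- positivity of the real part
  have hzpos : 0 < (formC G (z + star z) (z + star z)).re := by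
    have hzs : z + star z = cf (fun i => 2 * (a i + (-(formR G a c)/(formR G c c)) * c i)) := by
      funext i
      simp only [cf, Pi.add_apply, Pi.star_apply, Complex.star_def]
      rw [Complex.add_conj]
      have h3 : (z i).re = a i + (-(formR G a c)/(formR G c c)) * c i := by
        have := congrFun hrefun i
        simpa using this
      rw [h3]
    rw [hzs, formC_cf, formR_two_smul, Complex.ofReal_re]
    have h4 : formR G (fun i => a i + (-(formR G a c)/(formR G c c)) * c i)
        (fun i => a i + (-(formR G a c)/(formR G c c)) * c i)
        = (formR G a a * formR G c c - (formR G a c)^2) / formR G c c := by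
      have hexp2 := formR_expand G a c (-(formR G a c)/(formR G c c))
      rw [formR_symm hsymm c a] at hexp2
      have heq : (fun i => a i + (-(formR G a c)/(formR G c c)) * c i)
          = a + (-(formR G a c)/(formR G c c)) • c := by
        funext i; simp
      rw [heq, hexp2]
      field_simp
      ring
    rw [h4]
    have h6 := div_pos hD hqc
    linarith
  -- assemble the exceptional point
  refine ⟨⟨Projectivization.mk ℂ z hz, ⟨z, hz, rfl, hzq, hzpos⟩⟩, ?_, ?_⟩
  · rw [← hVU]
    exact (hO z hz).mpr haO
  · show IsExceptional _
    refine ⟨z, hz, rfl, A, Crat, ?_⟩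
    have hA' : (fun i => ((A i : ℝ))) = a := hA
    have hC' : (fun i => ((Crat i : ℝ))) = c := hC
    rw [hrefun, himfun, hA', hC']
    exact span_pair_shear a c _ _ hsi
end
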